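/- arXiv:2208.10074 — 6 statements merged into one kernel-verified Lean document; each statement's English description precedes it below -/
import Mathlib

section
/- For any positive integers p, q, n with n ≤ pq + p + q - 1, any n-vertex tree T has a set S of at most p vertices such that each connected component of T − S has at most q vertices. -/
open SimpleGraph

/-- The strong product of two simple graphs. -/
def StrongProd {V W : Type*} (G : SimpleGraph V) (H : SimpleGraph W) : SimpleGraph (V × W) where
  Adj a b := a ≠ b ∧ (a.1 = b.1 ∨ G.Adj a.1 b.1) ∧ (a.2 = b.2 ∨ H.Adj a.2 b.2)
  symm := by
    constructor
    rintro a b ⟨hne, h1, h2⟩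
    exact ⟨hne.symm, h1.imp Eq.symm (fun h => h.symm), h2.imp Eq.symm (fun h => h.symm)⟩
  loopless := by constructor; rintro a ⟨hne, _⟩; exact hne rfl

/-- `G` is isomorphic to a subgraph of `H`. -/
def ContainedIn {V W : Type*} (G : SimpleGraph V) (H : SimpleGraph W) : Prop :=
  ∃ f : V → W, Function.Injective f ∧ ∀ ⦃u v⦄, G.Adj u v → H.Adj (f u) (f v)

/-- Every connected component of `G - S` has at most `q` vertices. -/
def CompsLE {V : Type*} (G : SimpleGraph V) (S : Set V) (q : ℕ) : Prop :=
  ∀ c : (G.induce Sᶜ).ConnectedComponent, Nat.card c.supp ≤ q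

/-- Every connected component of `G - S` has at most `q` vertices (real bound). -/
def CompsLER {V : Type*} (G : SimpleGraph V) (S : Set V) (q : ℝ) : Prop :=
  ∀ c : (G.induce Sᶜ).ConnectedComponent, (Nat.card c.supp : ℝ) ≤ q

/-- `(TG, B)` is a tree-decomposition of `G`: `TG` is a tree, every vertex and
every edge of `G` lies in some bag, and for each vertex the set of nodes whose
bag contains it induces a nonempty connected subgraph of `TG`. -/
def IsTreeDecomp {V T : Type*} (G : SimpleGraph V) (TG : SimpleGraph T) (B : T → Set V) : Prop :=
  TG.IsTree ∧
  (∀ v, ∃ t, v ∈ B t) ∧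
  (∀ ⦃u v⦄, G.Adj u v → ∃ t, u ∈ B t ∧ v ∈ B t) ∧
  (∀ v, (TG.induce {t | v ∈ B t}).Connected)

/-- The tree-width of `G` is at most `k`. -/
def twLE {V : Type*} (G : SimpleGraph V) (k : ℕ) : Prop :=
  ∃ (T : Type) (TG : SimpleGraph T) (B : T → Set V),
    IsTreeDecomp G TG B ∧ ∀ t, Nat.card (B t) ≤ k + 1

/-- A path-decomposition of `G` with `t` bags. -/
def IsPathDecomp {V : Type*} (G : SimpleGraph V) (t : ℕ) (B : Fin t → Set V) : Prop :=
  (∀ v, ∃ i, v ∈ B i) ∧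
  (∀ ⦃u v⦄, G.Adj u v → ∃ i, u ∈ B i ∧ v ∈ B i) ∧
  (∀ i j l : Fin t, i ≤ j → j ≤ l → B i ∩ B l ⊆ B j)

/-- The path-width of `G` is at most `k`. -/
def pwLE {V : Type*} (G : SimpleGraph V) (k : ℕ) : Prop :=
  ∃ (t : ℕ) (B : Fin t → Set V), IsPathDecomp G t B ∧ ∀ i, Nat.card (B i) ≤ k + 1

/-- The tree-depth of `G` is at most `d`: there is a strict forest order (the
strict ancestor relation of a rooted forest) whose comparability graph contains
`G`, with all chains of at most `d` vertices. -/
def tdLE {V : Type*} (G : SimpleGraph V) (d : ℕ) : Prop :=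
  ∃ lt : V → V → Prop,
    Transitive lt ∧
    (∀ u v w, lt u w → lt v w → lt u v ∨ lt v u ∨ u = v) ∧
    (∀ ⦃u v⦄, G.Adj u v → lt u v ∨ lt v u) ∧
    ∃ f : V → Fin d, ∀ u v, lt u v → f u < f v

/-- `P` is an `H`-partition of `G`: the parts partition `V(G)` and every edge of
`G` lies within a part or between parts indexed by adjacent vertices of `H`. -/
def IsHPartition {V W : Type*} (G : SimpleGraph V) (H : SimpleGraph W) (P : W → Set V) : Prop :=
  (∀ v, ∃! x, v ∈ P x) ∧
  ∀ ⦃u v⦄, G.Adj u v → ∀ ⦃x y⦄, u ∈ P x → v ∈ P y → x = y ∨ H.Adj x y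

/-- The tree-partition-width of `G` is at most `m`. -/
def tpwLE {V : Type*} (G : SimpleGraph V) (m : ℕ) : Prop :=
  ∃ (T : Type) (TG : SimpleGraph T) (P : T → Set V),
    TG.IsTree ∧ IsHPartition G TG P ∧ ∀ x, Nat.card (P x) ≤ m

/-- The star with centre `none` and leaves `some i`, `i : ι`. -/
def starGraph (ι : Type*) : SimpleGraph (Option ι) where
  Adj a b := a ≠ b ∧ (a = none ∨ b = none)
  symm := by constructor; rintro a b ⟨hne, h⟩; exact ⟨hne.symm, h.symm⟩
  loopless := by constructor; rintro a ⟨hne, _⟩; exact hne rfl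

/-- A graph class is hereditary if it is closed under induced subgraphs. -/
def Hereditary (𝒢 : ∀ V : Type, SimpleGraph V → Prop) : Prop :=
  ∀ (V : Type) (G : SimpleGraph V), 𝒢 V G → ∀ S : Set V, 𝒢 S (G.induce S)

/-- Every `n`-vertex graph of the class has a balanced separator of size at most
`c * n ^ (1 - ε)`. -/
def SepBound (𝒢 : ∀ V : Type, SimpleGraph V → Prop) (c ε : ℝ) : Prop :=
  ∀ (V : Type) [Fintype V] (G : SimpleGraph V), 𝒢 V G →
    ∃ S : Finset V, (S.card : ℝ) ≤ c * (Fintype.card V : ℝ) ^ (1 - ε) ∧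
      CompsLER G ↑S ((Fintype.card V : ℝ) / 2)

/-- The `k`-th power of the `n`-vertex path. -/
def pathPow (n k : ℕ) : SimpleGraph (Fin n) where
  Adj i j := i ≠ j ∧ (i.val : ℤ) - j.val ≤ k ∧ (j.val : ℤ) - i.val ≤ k
  symm := by constructor; rintro i j ⟨hne, h1, h2⟩; exact ⟨hne.symm, h2, h1⟩
  loopless := by constructor; rintro i ⟨hne, _⟩; exact hne rfl

section TreeSep

variable {V : Type} {G : SimpleGraph V}

def Reach (G : SimpleGraph V) (S : Set V) (a b : V) : Prop :=
  ∃ p : G.Walk a b, ∀ x ∈ p.support, x ∉ S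

lemma reach_refl {S : Set V} {a : V} (h : a ∉ S) : Reach G S a a :=
  ⟨Walk.nil, by simpa using h⟩

lemma reach_left {S : Set V} {a b : V} (h : Reach G S a b) : a ∉ S := by
  obtain ⟨p, hp⟩ := h; exact hp a p.start_mem_support

lemma reach_right {S : Set V} {a b : V} (h : Reach G S a b) : b ∉ S := by
  obtain ⟨p, hp⟩ := h; exact hp b p.end_mem_support

lemma reach_symm {S : Set V} {a b : V} (h : Reach G S a b) : Reach G S b a := by
  obtain ⟨p, hp⟩ := h
  exact ⟨p.reverse, by simpa using hp⟩

lemma reach_trans {S : Set V} {a b c : V} (h : Reach G S a b) (h' : Reach G S b c) :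
    Reach G S a c := by
  obtain ⟨p, hp⟩ := h; obtain ⟨p', hp'⟩ := h'
  refine ⟨p.append p', fun x hx => ?_⟩
  rcases (Walk.mem_support_append_iff _ _).1 hx with hx | hx
  · exact hp x hx
  · exact hp' x hx

lemma reach_mono {S S' : Set V} (hSS : S ⊆ S') {a b : V} (h : Reach G S' a b) :
    Reach G S a b := by
  obtain ⟨p, hp⟩ := h; exact ⟨p, fun x hx hxS => hp x hx (hSS hxS)⟩

lemma reach_adj {S : Set V} {a b c : V} (h : Reach G S a b) (hbc : G.Adj b c) (hc : c ∉ S) :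
    Reach G S a c := by
  refine reach_trans h ⟨Walk.cons hbc Walk.nil, ?_⟩
  intro x hx
  simp only [Walk.support_cons, Walk.support_nil, List.mem_cons, List.mem_singleton] at hx
  rcases hx with rfl | hx
  · exact reach_right h
  · simp at hx; subst hx; exact hc

lemma reach_of_mem_support {S : Set V} {a b y : V} (p : G.Walk a b)
    (hp : ∀ x ∈ p.support, x ∉ S) (hy : y ∈ p.support) : Reach G S a y := by
  classical
  exact ⟨p.takeUntil y hy, fun x hx => hp x (p.support_takeUntil_subset hy hx)⟩

lemma unique_nbr (hT : G.IsTree) {S : Set V} {v : V} (hv : v ∈ S) {a y₁ y₂ : V}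
    (h₁ : Reach G S a y₁) (h₂ : Reach G S a y₂)
    (e₁ : G.Adj v y₁) (e₂ : G.Adj v y₂) : y₁ = y₂ := by
  classical
  by_contra hne
  obtain ⟨W, hW⟩ : Reach G S y₁ y₂ := by
    obtain ⟨p, hp⟩ := h₁; obtain ⟨p', hp'⟩ := h₂
    exact ⟨p.reverse.append p', fun x hx => by
      rcases (Walk.mem_support_append_iff _ _).1 hx with hx | hx
      · exact hp x (by simpa using hx)
      · exact hp' x hx⟩
  have hvW : v ∉ W.support := fun h => hW v h hv
  set P := W.bypass with hP
  have hPpath : P.IsPath := W.bypass_isPath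
  have hvP : v ∉ P.support := fun h => hvW (W.support_bypass_subset h)
  have hpath1 : (Walk.cons e₁ P).IsPath := by
    rw [Walk.cons_isPath_iff]; exact ⟨hPpath, hvP⟩
  have hpath2 : (Walk.cons e₂ (Walk.nil : G.Walk y₂ y₂)).IsPath := by
    rw [Walk.cons_isPath_iff]
    simp [G.ne_of_adj e₂]
  have := (hT.existsUnique_path v y₂).unique hpath1 hpath2
  have hlen : P.length ≠ 0 := by
    intro h
    have := Walk.eq_of_length_eq_zero h
    exact hne this
  have : (Walk.cons e₁ P).length = (Walk.cons e₂ (Walk.nil : G.Walk y₂ y₂)).length := by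
    rw [this]
  simp [Walk.length_cons] at this
  exact hlen (Walk.nil_iff_length_eq.mp this)

lemma stay {U : Set V} {v a w : V}
    (huniq : ∀ y, Reach G ({v} ∪ Uᶜ) a y → G.Adj v y → y = w) :
    ∀ {b c : V} (p : G.Walk b c), Reach G ({v} ∪ Uᶜ) a b →
      (∀ x ∈ p.support, x ∉ ({w} ∪ Uᶜ : Set V)) → Reach G ({v} ∪ Uᶜ) a c := by
  intro b c p
  induction p with
  | nil => intro h _; exact h
  | @cons b b₂ c hadj p ih =>
    intro hb hsupp
    have hb₂s : b₂ ∉ ({w} ∪ Uᶜ : Set V) := hsupp b₂ (by simp [Walk.support_cons])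
    have hb₂v : b₂ ≠ v := by
      intro h; subst h
      have : b = w := huniq b hb hadj.symm
      exact hsupp b (by simp [Walk.support_cons]) (by simp [this])
    have hnb : b₂ ∉ ({v} ∪ Uᶜ : Set V) := by
      simp only [Set.mem_union, Set.mem_singleton_iff]
      push_neg
      exact ⟨hb₂v, fun h => hb₂s (Or.inr h)⟩
    have h2 : Reach G ({v} ∪ Uᶜ) a b₂ := reach_adj hb hadj hnb
    exact ih h2 (fun x hx => hsupp x (by simp [Walk.support_cons, hx]))

def Valid (G : SimpleGraph V) (U : Set V) (q : ℕ) (v : V) (D : Set V) : Prop :=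
  v ∈ D ∧ D ⊆ U ∧ q + 1 ≤ D.ncard ∧
    ∀ a ∈ D, a ≠ v → ∀ x, Reach G ({v} ∪ Uᶜ) a x → x ∈ D

lemma extraction [Finite V] (hT : G.IsTree) (U : Set V) (q : ℕ) :
    ∀ k (v : V) (D : Set V), Valid G U q v D → D.ncard ≤ k →
    ∃ v' D', Valid G U q v' D' ∧ D' ⊆ D ∧
      ∀ a ∈ D', a ≠ v' → {x | Reach G ({v'} ∪ Uᶜ) a x}.ncard ≤ q := by
  intro k
  induction k with
  | zero =>
    intro v D hval hcard
    exact absurd (hval.2.2.1.trans hcard) (by omega)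
  | succ k ih =>
    intro v D hval hcard
    by_cases hsmall : ∀ a ∈ D, a ≠ v → {x | Reach G ({v} ∪ Uᶜ) a x}.ncard ≤ q
    · exact ⟨v, D, hval, subset_rfl, hsmall⟩
    push_neg at hsmall
    obtain ⟨a, haD, hav, hbig⟩ := hsmall
    set R : Set V := {x | Reach G ({v} ∪ Uᶜ) a x} with hR
    have haA : a ∉ ({v} ∪ Uᶜ : Set V) := by
      simp only [Set.mem_union, Set.mem_singleton_iff, Set.mem_compl_iff]
      push_neg
      exact ⟨hav, by simpa using hval.2.1 haD⟩
    have haR : a ∈ R := reach_refl haA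
    have hRD : R ⊆ D := fun x hx => hval.2.2.2 a haD hav x hx
    have hvR : v ∉ R := fun h => (reach_right h) (Or.inl rfl)
    have hRU : R ⊆ U := fun x hx => by
      have := reach_right hx
      simp only [Set.mem_union, Set.mem_singleton_iff, Set.mem_compl_iff] at this
      push_neg at this
      exact this.2
    -- choose the centre w
    obtain ⟨w, hwR, huniq⟩ : ∃ w ∈ R, ∀ y, Reach G ({v} ∪ Uᶜ) a y → G.Adj v y → y = w := by
      by_cases hex : ∃ y, Reach G ({v} ∪ Uᶜ) a y ∧ G.Adj v y
      · obtain ⟨w, hw1, hw2⟩ := hex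
        exact ⟨w, hw1, fun y hy hadj => unique_nbr hT (Or.inl rfl) hy hw1 hadj hw2⟩
      · push_neg at hex
        exact ⟨a, haR, fun y hy hadj => absurd hadj (hex y hy)⟩
    have hclosed : ∀ b ∈ R, b ≠ w → ∀ x, Reach G ({w} ∪ Uᶜ) b x → x ∈ R := by
      intro b hbR _ x hx
      obtain ⟨p, hp⟩ := hx
      exact stay huniq p hbR hp
    have hval' : Valid G U q w R := ⟨hwR, hRU, by omega, hclosed⟩
    have hssub : R ⊂ D := ⟨hRD, fun h => hvR (h hval.1)⟩
    have hlt : R.ncard < D.ncard := Set.ncard_lt_ncard hssub (Set.toFinite D)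
    obtain ⟨v', D', h1, h2, h3⟩ := ih w R hval' (by omega)
    exact ⟨v', D', h1, h2.trans hRD, h3⟩

lemma main_lemma [Finite V] (hT : G.IsTree) (q : ℕ) :
    ∀ p (U : Set V), U.ncard + 2 ≤ (p + 1) * (q + 1) →
    ∃ S : Finset V, ↑S ⊆ U ∧ S.card ≤ p ∧
      ∀ a ∈ U, a ∉ S → {x | Reach G (↑S ∪ Uᶜ) a x}.ncard ≤ q := by
  classical
  intro p
  induction p with
  | zero =>
    intro U hU
    refine ⟨∅, by simp, by simp, fun a haU haS => ?_⟩
    have hsub : {x | Reach G ((↑(∅ : Finset V) : Set V) ∪ Uᶜ) a x} ⊆ U := by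
      intro x hx
      have := reach_right hx
      simp only [Set.mem_union, Set.mem_compl_iff, Finset.coe_empty,
        Set.mem_empty_iff_false] at this
      push_neg at this
      exact this.2
    have := Set.ncard_le_ncard hsub (Set.toFinite U)
    omega
  | succ p ih =>
    intro U hU
    by_cases hUq : U.ncard ≤ q
    · refine ⟨∅, by simp, by simp, fun a haU haS => ?_⟩
      have hsub : {x | Reach G ((↑(∅ : Finset V) : Set V) ∪ Uᶜ) a x} ⊆ U := by
        intro x hx
        have := reach_right hx
        simp only [Set.mem_union, Set.mem_compl_iff, Finset.coe_empty,
          Set.mem_empty_iff_false] at this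
        push_neg at this
        exact this.2
      have := Set.ncard_le_ncard hsub (Set.toFinite U)
      omega
    push_neg at hUq
    -- get a starting valid pair (v₀, U)
    obtain ⟨v₀, hv₀⟩ : U.Nonempty := by
      rw [← Set.ncard_pos (Set.toFinite U)]; omega
    have hval₀ : Valid G U q v₀ U :=
      ⟨hv₀, subset_rfl, by omega, fun a _ _ x hx => by
        have := reach_right hx
        simp only [Set.mem_union, Set.mem_singleton_iff, Set.mem_compl_iff] at this
        push_neg at this
        exact this.2⟩
    obtain ⟨v, D, hval, _, hsmall⟩ := extraction hT U q U.ncard v₀ U hval₀ le_rfl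
    set U' : Set V := U \ D with hU'
    have hDU : D ⊆ U := hval.2.1
    have hU'card : U'.ncard = U.ncard - D.ncard := Set.ncard_diff hDU (Set.toFinite D)
    have hDcard : q + 1 ≤ D.ncard := hval.2.2.1
    have hDle : D.ncard ≤ U.ncard := Set.ncard_le_ncard hDU (Set.toFinite U)
    have hexpand : (p + 1 + 1) * (q + 1) = (p + 1) * (q + 1) + (q + 1) := by ring
    obtain ⟨S', hS'U, hS'card, hgood'⟩ := ih U' (by omega)
    refine ⟨insert v S', ?_, ?_, ?_⟩
    · intro x hx
      simp only [Finset.coe_insert, Set.mem_insert_iff] at hx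
      rcases hx with rfl | hx
      · exact hDU hval.1
      · exact (hS'U hx).1
    · exact (Finset.card_insert_le _ _).trans (by omega)
    · intro a haU haS
      have hav : a ≠ v := fun h => haS (by simp [h])
      have haS' : a ∉ S' := fun h => haS (by simp [h])
      have hAsub : ({v} ∪ Uᶜ : Set V) ⊆ ↑(insert v S') ∪ Uᶜ := by
        intro x hx
        rcases hx with hx | hx
        · simp only [Set.mem_singleton_iff] at hx
          exact Or.inl (by simp [hx])
        · exact Or.inr hx
      by_cases haD : a ∈ D
      · have hsub : {x | Reach G (↑(insert v S') ∪ Uᶜ) a x} ⊆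
            {x | Reach G ({v} ∪ Uᶜ) a x} := fun x hx => reach_mono hAsub hx
        have h1 := Set.ncard_le_ncard hsub (Set.toFinite _)
        have h2 := hsmall a haD hav
        omega
      · -- a ∈ U'
        have haU' : a ∈ U' := ⟨haU, haD⟩
        have hsub : {x | Reach G (↑(insert v S') ∪ Uᶜ) a x} ⊆
            {x | Reach G (↑S' ∪ U'ᶜ) a x} := by
          intro x hx
          obtain ⟨p, hp⟩ := hx
          have hsuppD : ∀ y ∈ p.support, y ∉ D := by
            intro y hy hyD
            have hyv : y ≠ v := by
              intro h; subst h
              exact hp y hy (Or.inl (by simp))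
            have hray : Reach G (↑(insert v S') ∪ Uᶜ) a y :=
              reach_of_mem_support p hp hy
            have : Reach G ({v} ∪ Uᶜ) y a := reach_symm (reach_mono hAsub hray)
            exact haD (hval.2.2.2 y hyD hyv a this)
          refine ⟨p, fun y hy => ?_⟩
          have h1 := hp y hy
          simp only [Set.mem_union, Set.mem_compl_iff, Finset.coe_insert,
            Set.mem_insert_iff, Finset.mem_coe] at h1
          push_neg at h1
          simp only [Set.mem_union, Finset.mem_coe, Set.mem_compl_iff, hU',
            Set.mem_diff]
          push_neg
          exact ⟨h1.1.2, h1.2, hsuppD y hy⟩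
        have h1 := Set.ncard_le_ncard hsub (Set.toFinite _)
        have h2 := hgood' a haU' haS'
        omega

lemma walk_to_reach {s : Set V} {a b : ↥s} (w : (G.induce s).Walk a b) :
    Reach G sᶜ ↑a ↑b := by
  induction w with
  | nil => exact reach_refl (by simp)
  | @cons x y z h p ih =>
    have hadj : G.Adj ↑x ↑y := h
    exact reach_trans (reach_adj (reach_refl (by simp : (↑x : V) ∉ sᶜ)) hadj (by simp)) ih

lemma compsLE_of_reach [Finite V] (S : Set V) (q : ℕ)
    (h : ∀ a ∉ S, {x | Reach G S a x}.ncard ≤ q) : CompsLE G S q := by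
  intro c
  obtain ⟨a, rfl⟩ := c.exists_rep
  have key : (Subtype.val '' ((G.induce Sᶜ).connectedComponentMk a).supp) ⊆
      {x | Reach G S ↑a x} := by
    rintro x ⟨b, hb, rfl⟩
    rw [ConnectedComponent.mem_supp_iff] at hb
    have hr : (G.induce Sᶜ).Reachable a b := (ConnectedComponent.eq.mp hb.symm)
    obtain ⟨w⟩ := hr
    have := walk_to_reach w
    rwa [compl_compl] at this
  calc Nat.card ((G.induce Sᶜ).connectedComponentMk a).supp
      = ((G.induce Sᶜ).connectedComponentMk a).supp.ncard := Nat.card_coe_set_eq _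
    _ = (Subtype.val '' ((G.induce Sᶜ).connectedComponentMk a).supp).ncard :=
        (Set.ncard_image_of_injective _ Subtype.val_injective).symm
    _ ≤ {x | Reach G S ↑a x}.ncard := Set.ncard_le_ncard key (Set.toFinite _)
    _ ≤ q := h ↑a a.2


theorem tree_separator (p q n : ℕ) (hp : 0 < p) (hq : 0 < q) (hn : 0 < n)
    (hnpq : n ≤ p * q + p + q - 1)
    (V : Type) [Fintype V] (hcard : Fintype.card V = n)
    (T : SimpleGraph V) (hT : T.IsTree) :
    ∃ S : Finset V, S.card ≤ p ∧ CompsLE T (↑S) q := by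
  classical
  have hbound : (Set.univ : Set V).ncard + 2 ≤ (p + 1) * (q + 1) := by
    rw [Set.ncard_univ, Nat.card_eq_fintype_card, hcard]
    have hring : (p + 1) * (q + 1) = p * q + p + q + 1 := by ring
    omega
  obtain ⟨S, _, hScard, hgood⟩ := main_lemma hT q p Set.univ hbound
  refine ⟨S, hScard, compsLE_of_reach _ q ?_⟩
  intro a haS
  have h := hgood a (Set.mem_univ a) haS
  simpa using h

end TreeSep
end

section
/- Let k, n be positive integers and p, q positive reals with n(k+1) ≤ pq and p ≥ k+1. Then any n-vertex graph G with tree-width at most k has a set S of at most p vertices such that each connected component of G − S has at most q vertices. -/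
open SimpleGraph

open SimpleGraph Walk

section TreeAux
variable {T : Type} {H : SimpleGraph T}

noncomputable def upath (ht : H.IsTree) (x y : T) : H.Walk x y :=
  (ht.existsUnique_path x y).exists.choose

lemma upath_isPath (ht : H.IsTree) (x y : T) : (upath ht x y).IsPath :=
  (ht.existsUnique_path x y).exists.choose_spec

lemma upath_unique (ht : H.IsTree) {x y : T} {p : H.Walk x y} (hp : p.IsPath) :
    p = upath ht x y :=
  (ht.existsUnique_path x y).unique hp (upath_isPath ht x y)

lemma path_le_walk (ht : H.IsTree) {x y : T} (w : H.Walk x y) :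
    (upath ht x y).support ⊆ w.support := by
  classical
  rw [← upath_unique ht w.bypass_isPath]
  exact w.support_bypass_subset

lemma upath_symm (ht : H.IsTree) (x y : T) : (upath ht x y).reverse = upath ht y x :=
  upath_unique ht ((upath_isPath ht x y).reverse)

lemma mem_support_upath_symm (ht : H.IsTree) {x y z : T} (h : z ∈ (upath ht x y).support) :
    z ∈ (upath ht y x).support := by
  rw [← upath_symm ht x y, support_reverse]; simpa using h

lemma upath_take (ht : H.IsTree) [DecidableEq T] {x y z : T} (h : z ∈ (upath ht x y).support) :
    (upath ht x y).takeUntil z h = upath ht x z :=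
  upath_unique ht ((upath_isPath ht x y).takeUntil h)

lemma upath_drop (ht : H.IsTree) [DecidableEq T] {x y z : T} (h : z ∈ (upath ht x y).support) :
    (upath ht x y).dropUntil z h = upath ht z y :=
  upath_unique ht ((upath_isPath ht x y).dropUntil h)

lemma upath_split (ht : H.IsTree) {x y z : T} (h : z ∈ (upath ht x y).support) :
    upath ht x y = (upath ht x z).append (upath ht z y) := by
  classical
  rw [← upath_take ht h, ← upath_drop ht h, take_spec]

/-- ancestor relation wrt root `r` -/
def anc (ht : H.IsTree) (r t s : T) : Prop := t ∈ (upath ht r s).support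

lemma anc_refl (ht : H.IsTree) (r t : T) : anc ht r t t := (upath ht r t).end_mem_support

lemma anc_root (ht : H.IsTree) (r s : T) : anc ht r r s := (upath ht r s).start_mem_support

lemma anc_trans (ht : H.IsTree) {r t s u : T} (h1 : anc ht r t s) (h2 : anc ht r s u) :
    anc ht r t u := by
  unfold anc at *
  rw [upath_split ht h2, mem_support_append_iff]
  exact Or.inl h1

noncomputable def dep (ht : H.IsTree) (r t : T) : ℕ := (upath ht r t).length

lemma anc_length (ht : H.IsTree) {r t s : T} (h : anc ht r t s) :
    dep ht r t + (upath ht t s).length = dep ht r s := by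
  unfold dep
  rw [upath_split ht h, length_append]

lemma anc_dep_le (ht : H.IsTree) {r t s : T} (h : anc ht r t s) : dep ht r t ≤ dep ht r s := by
  have := anc_length ht h; omega

lemma anc_eq_of_dep (ht : H.IsTree) {r t s : T} (h : anc ht r t s)
    (hd : dep ht r s ≤ dep ht r t) : t = s := by
  have := anc_length ht h
  exact Walk.eq_of_length_eq_zero (by omega : (upath ht t s).length = 0)

lemma anc_antisymm (ht : H.IsTree) {r t s : T} (h1 : anc ht r t s) (h2 : anc ht r s t) : t = s :=
  anc_eq_of_dep ht h1 (anc_dep_le ht h2)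

lemma sep_lemma (ht : H.IsTree) {r t a b : T} (ha : anc ht r t a) (hb : ¬ anc ht r t b) :
    t ∈ (upath ht a b).support := by
  have hsub := path_le_walk ht ((upath ht r b).append (upath ht b a))
  have := hsub ha
  rw [mem_support_append_iff] at this
  rcases this with h | h
  · exact absurd h hb
  · exact mem_support_upath_symm ht h

lemma anc_comparable (ht : H.IsTree) {r t1 t2 s : T} (h1 : anc ht r t1 s) (h2 : anc ht r t2 s) :
    anc ht r t1 t2 ∨ anc ht r t2 t1 := by
  unfold anc at h1
  rw [upath_split ht h2, mem_support_append_iff] at h1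
  rcases h1 with h | h
  · exact Or.inl h
  · right
    have hsplit2 := upath_split ht h
    have hW : ((upath ht r t2).append (upath ht t2 t1)).IsPath := by
      have : upath ht r s = ((upath ht r t2).append (upath ht t2 t1)).append (upath ht t1 s) := by
        rw [← Walk.append_assoc, ← hsplit2]; exact upath_split ht h2
      have hp := upath_isPath ht r s
      rw [this] at hp
      exact hp.of_append_left
    have : upath ht r t1 = (upath ht r t2).append (upath ht t2 t1) := (upath_unique ht hW).symm
    unfold anc
    rw [this, mem_support_append_iff]
    exact Or.inl (upath ht r t2).end_mem_support

end TreeAux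

section TreeAux2
variable {T : Type} {H : SimpleGraph T}

def isChild (ht : H.IsTree) (r t c s : T) : Prop :=
  H.Adj t c ∧ anc ht r t c ∧ anc ht r c s

lemma adj_anc_dep (ht : H.IsTree) {r t c : T} (hadj : H.Adj t c) (h : anc ht r t c) :
    dep ht r c = dep ht r t + 1 := by
  have hp : (Walk.cons hadj Walk.nil).IsPath := by
    rw [Walk.isPath_def]
    simp [hadj.ne]
  have he : upath ht t c = Walk.cons hadj Walk.nil := (upath_unique ht hp).symm
  have hl := anc_length ht h
  rw [he] at hl
  simp only [Walk.length_cons, Walk.length_nil] at hl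
  omega

lemma child_eq (ht : H.IsTree) {r t c1 c2 s : T} (h1 : isChild ht r t c1 s)
    (h2 : isChild ht r t c2 s) : c1 = c2 := by
  have d1 := adj_anc_dep ht h1.1 h1.2.1
  have d2 := adj_anc_dep ht h2.1 h2.2.1
  rcases anc_comparable ht h1.2.2 h2.2.2 with h | h
  · exact anc_eq_of_dep ht h (by omega)
  · exact (anc_eq_of_dep ht h (by omega)).symm

lemma child_exists (ht : H.IsTree) {r t s : T} (h : anc ht r t s) (hne : t ≠ s) :
    ∃ c, isChild ht r t c s := by
  classical
  obtain ⟨c, hadj, p', hP⟩ := Walk.exists_eq_cons_of_ne hne (upath ht t s)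
  have hsplit := upath_split ht h
  have hcp : c ∈ p'.support := p'.start_mem_support
  have hcts : c ∈ (upath ht t s).support := by
    rw [hP, Walk.support_cons]; exact List.mem_cons_of_mem _ hcp
  have hancs : anc ht r c s := by
    unfold anc; rw [hsplit, mem_support_append_iff]; exact Or.inr hcts
  have hnodup := (upath_isPath ht r s).2
  rw [hsplit, Walk.support_append] at hnodup
  have hdisj := List.disjoint_of_nodup_append hnodup
  have hcnot : c ∉ (upath ht r t).support := by
    intro hc
    exact hdisj hc (by rw [hP, Walk.support_cons]; simpa using hcp)
  have hWpath : ((upath ht r t).append (Walk.cons hadj Walk.nil)).IsPath := by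
    rw [Walk.isPath_def, Walk.support_append]
    refine List.Nodup.append (upath_isPath ht r t).2 ?_ ?_
    · simp
    · intro z hz hz2
      simp only [Walk.support_cons, Walk.support_nil, List.tail_cons, List.mem_singleton] at hz2
      subst hz2; exact hcnot hz
  have hanc : anc ht r t c := by
    unfold anc
    rw [← upath_unique ht hWpath, mem_support_append_iff]
    exact Or.inl (upath ht r t).end_mem_support
  exact ⟨c, hadj, hanc, hancs⟩

lemma children_sep (ht : H.IsTree) {r t c1 c2 s1 s2 : T} (h1 : isChild ht r t c1 s1)
    (h2 : isChild ht r t c2 s2) (hne : c1 ≠ c2) : t ∈ (upath ht s1 s2).support := by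
  have hna1 : ¬ anc ht r c1 s2 := fun h => hne (child_eq ht ⟨h1.1, h1.2.1, h⟩ h2)
  have hna2 : ¬ anc ht r c2 s1 := fun h => hne (child_eq ht h1 ⟨h2.1, h2.2.1, h⟩)
  have hc1mem : c1 ∈ (upath ht s1 s2).support := sep_lemma ht h1.2.2 hna1
  have hc2mem : c2 ∈ (upath ht s1 s2).support := by
    exact mem_support_upath_symm ht (sep_lemma ht h2.2.2 hna2)
  -- path c1 -> c2 through t
  have htc : t ∈ (upath ht c1 c2).support := by
    have hp : (Walk.cons h1.1.symm (Walk.cons h2.1 Walk.nil)).IsPath := by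
      rw [Walk.isPath_def]
      simp [hne, h1.1.ne', h2.1.ne]
    rw [← upath_unique ht hp]
    simp [Walk.support_cons]
  have hsplit1 := upath_split ht hc1mem
  rw [hsplit1, mem_support_append_iff] at hc2mem
  rw [hsplit1, mem_support_append_iff]
  rcases hc2mem with hc | hc
  · left
    have hc' : c2 ∈ (upath ht c1 s1).support := mem_support_upath_symm ht hc
    have := upath_split ht hc'
    have htmem : t ∈ (upath ht c1 s1).support := by
      rw [this, mem_support_append_iff]; exact Or.inl htc
    exact mem_support_upath_symm ht htmem
  · right
    rw [upath_split ht hc, mem_support_append_iff]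
    exact Or.inl htc

end TreeAux2

section Lift
variable {α : Type}

lemma lift_walk {K : SimpleGraph α} {S : Set α} {x y : α} (w : K.Walk x y)
    (h : ∀ z ∈ w.support, z ∈ S) (hx : x ∈ S) (hy : y ∈ S) :
    (K.induce S).Reachable ⟨x, hx⟩ ⟨y, hy⟩ := by
  induction w with
  | nil => rfl
  | @cons u v w hadj p ih =>
    have hv : v ∈ S := h v (by simp [Walk.support_cons, p.start_mem_support])
    have h1 : (K.induce S).Adj ⟨u, hx⟩ ⟨v, hv⟩ := by simp [comap_adj, hadj]
    exact h1.reachable.trans (ih (fun z hz => h z (by simp [Walk.support_cons]; right; exact hz)) hv hy)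

lemma mem_comp_of_mem_walk_support {K : SimpleGraph α} {x y z : α} (w : K.Walk x y)
    (hz : z ∈ w.support) : K.Reachable z y := by
  classical
  exact ⟨w.dropUntil z hz⟩

lemma comp_transfer {K : SimpleGraph α} {W1 W2 : Set α} (h12 : W1 ⊆ W2)
    (c : (K.induce W2).ConnectedComponent)
    (hsub : ∀ v : W2, v ∈ c.supp → (v : α) ∈ W1) :
    ∃ c1 : (K.induce W1).ConnectedComponent,
      (Subtype.val '' c.supp : Set α) ⊆ Subtype.val '' c1.supp := by
  obtain ⟨v0, rfl⟩ := c.exists_rep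
  have hv0 : v0 ∈ ((K.induce W2).connectedComponentMk v0).supp :=
    (ConnectedComponent.mem_supp_iff _ _).mpr rfl
  have hv0w : (v0 : α) ∈ W1 := hsub v0 hv0
  refine ⟨(K.induce W1).connectedComponentMk ⟨v0, hv0w⟩, ?_⟩
  rintro x ⟨u, hu, rfl⟩
  have hr : (K.induce W2).Reachable u v0 :=
    ConnectedComponent.exact ((ConnectedComponent.mem_supp_iff _ _).mp hu)
  obtain ⟨w⟩ := hr
  have hsupp : ∀ z ∈ w.support, (z : α) ∈ W1 := by
    intro z hz
    refine hsub z ?_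
    refine (ConnectedComponent.mem_supp_iff _ _).mpr ?_
    exact ConnectedComponent.sound (mem_comp_of_mem_walk_support w hz)
  have huw : (u : α) ∈ W1 := hsupp u w.start_mem_support
  let wd := w.map (Embedding.induce W2).toHom
  have hsupp' : ∀ z ∈ wd.support, z ∈ W1 := by
    intro z hz
    rw [Walk.support_map] at hz
    obtain ⟨z', hz', rfl⟩ := List.mem_map.mp hz
    exact hsupp z' hz'
  have hreach := lift_walk wd hsupp' huw hv0w
  refine ⟨⟨u, huw⟩, ?_, rfl⟩
  refine (ConnectedComponent.mem_supp_iff _ _).mpr ?_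
  exact ConnectedComponent.sound hreach

lemma walk_cross {K : SimpleGraph α} {W A : Set α} {x y : ↥W} (w : (K.induce W).Walk x y)
    (hx : (x : α) ∈ A) (hy : (y : α) ∉ A) :
    ∃ a b : ↥W, K.Adj ↑a ↑b ∧ (a : α) ∈ A ∧ (b : α) ∉ A := by
  induction w with
  | nil => exact absurd hx hy
  | @cons u v w hadj p ih =>
    by_cases hv : (v : α) ∈ A
    · exact ih hv hy
    · exact ⟨u, v, by simpa [comap_adj] using hadj, hx, hv⟩

end Lift

lemma exists_nice_decomp {V : Type} [Fintype V] [Nonempty V] {G : SimpleGraph V} {k : ℕ}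
    (htw : twLE G k) :
    ∃ (T : Type) (_ : Fintype T) (H : SimpleGraph T) (ht : H.IsTree) (B : T → Set V),
      (∀ t, Nat.card (B t) ≤ k + 1) ∧ (∀ v, ∃ t, v ∈ B t) ∧
      (∀ ⦃u v⦄, G.Adj u v → ∃ t, u ∈ B t ∧ v ∈ B t) ∧
      (∀ (v : V) {x y : T} (P : H.Walk x y), P.IsPath → v ∈ B x → v ∈ B y →
        ∀ z ∈ P.support, v ∈ B z) := by
  classical
  obtain ⟨T0, TG, B0, ⟨ht0, hcov0, hedge0, hconn0⟩, hsize0⟩ := htw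
  -- convexity of connected induced sets in the tree TG
  have conv0 : ∀ (s : Set T0), (TG.induce s).Connected → ∀ x y, x ∈ s → y ∈ s →
      ∀ z ∈ (upath ht0 x y).support, z ∈ s := by
    intro s hs x y hx hy z hz
    obtain ⟨w'⟩ := hs.preconnected ⟨x, hx⟩ ⟨y, hy⟩
    have hsub := path_le_walk ht0 (w'.map (Embedding.induce s).toHom)
    have hmem := hsub hz
    rw [Walk.support_map] at hmem
    obtain ⟨z', _, rfl⟩ := List.mem_map.mp hmem
    exact z'.2
  set wv : V → T0 := fun v => (hcov0 v).choose with hwvdef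
  have hwv : ∀ v, v ∈ B0 (wv v) := fun v => (hcov0 v).choose_spec
  set we : V → V → T0 := fun u v => if h : G.Adj u v then (hedge0 h).choose else wv u with hwedef
  have hwe : ∀ {u v : V} (h : G.Adj u v), u ∈ B0 (we u v) ∧ v ∈ B0 (we u v) := by
    intro u v h
    simp only [hwedef, dif_pos h]
    exact (hedge0 h).choose_spec
  set W0 : Set T0 := Set.range wv ∪ Set.range (fun p : V × V => we p.1 p.2) with hW0def
  have hW0fin : W0.Finite := (Set.finite_range _).union (Set.finite_range _)
  set TS : Set T0 := ⋃ (a ∈ W0) (b ∈ W0), {z | z ∈ (upath ht0 a b).support} with hTSdef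
  have hTSfin : TS.Finite :=
    hW0fin.biUnion fun a _ => hW0fin.biUnion fun b _ => (upath ht0 a b).support.finite_toSet
  have hmemTS : ∀ {a b z : T0}, a ∈ W0 → b ∈ W0 → z ∈ (upath ht0 a b).support → z ∈ TS := by
    intro a b z ha hb hz
    exact Set.mem_biUnion ha (Set.mem_biUnion hb hz)
  have hW0TS : W0 ⊆ TS := fun a ha => hmemTS ha ha (upath ht0 a a).start_mem_support
  have hTSconv : ∀ x y, x ∈ TS → y ∈ TS → ∀ z ∈ (upath ht0 x y).support, z ∈ TS := by
    intro x y hx hy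
    simp only [hTSdef, Set.mem_iUnion] at hx hy
    obtain ⟨a, ha, b, hb, hxab⟩ := hx
    obtain ⟨c, hc, d, hd, hycd⟩ := hy
    have h1 : ∀ z ∈ (upath ht0 x a).support, z ∈ TS := by
      intro z hz
      have hz' : z ∈ (upath ht0 a x).support := mem_support_upath_symm ht0 hz
      rw [← upath_take ht0 hxab] at hz'
      exact hmemTS ha hb (Walk.support_takeUntil_subset _ _ hz')
    have h2 : ∀ z ∈ (upath ht0 c y).support, z ∈ TS := by
      intro z hz
      rw [← upath_take ht0 hycd] at hz
      exact hmemTS hc hd (Walk.support_takeUntil_subset _ _ hz)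
    intro z hz
    have hmain := path_le_walk ht0
      ((upath ht0 x a).append ((upath ht0 a c).append (upath ht0 c y))) hz
    rw [mem_support_append_iff, mem_support_append_iff] at hmain
    rcases hmain with h | h | h
    · exact h1 z h
    · exact hmemTS ha hc h
    · exact h2 z h
  refine ⟨↥TS, hTSfin.fintype, TG.induce TS, ?_, fun t => B0 ↑t, ?_, ?_, ?_, ?_⟩
  rotate_left
  · intro t; exact hsize0 _
  · intro v; exact ⟨⟨wv v, hW0TS (Or.inl ⟨v, rfl⟩)⟩, hwv v⟩
  · intro u v h
    exact ⟨⟨we u v, hW0TS (Or.inr ⟨(u, v), rfl⟩)⟩, (hwe h).1, (hwe h).2⟩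
  · -- convexity
    intro v x y P hP hx hy z hz
    have hPd : (P.map (Embedding.induce TS).toHom).IsPath :=
      Walk.map_isPath_of_injective Subtype.val_injective hP
    have hEq : P.map (Embedding.induce TS).toHom = upath ht0 ↑x ↑y := upath_unique ht0 hPd
    have hzz : (z : T0) ∈ (upath ht0 ↑x ↑y).support := by
      have h' : (z : T0) ∈ (P.map (Embedding.induce TS).toHom).support := by
        rw [Walk.support_map]; exact List.mem_map.mpr ⟨z, hz, rfl⟩
      exact hEq ▸ h'
    exact conv0 _ (hconn0 v) _ _ hx hy _ hzz
  · -- tree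
    constructor
    · rw [connected_iff]
      constructor
      · intro x y
        have hsupp : ∀ z ∈ (upath ht0 ↑x ↑y).support, z ∈ TS := hTSconv _ _ x.2 y.2
        have := lift_walk (S := TS) (upath ht0 ↑x ↑y) hsupp x.2 y.2
        exact this
      · exact ⟨⟨wv (Classical.arbitrary V), hW0TS (Or.inl ⟨_, rfl⟩)⟩⟩
    · intro x w hw
      exact ht0.IsAcyclic _ (Walk.IsCycle.map (f := (Embedding.induce TS).toHom) Subtype.val_injective hw)

lemma core {V : Type} [Fintype V] (G : SimpleGraph V) (k : ℕ) (q : ℝ)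
    {T : Type} [Fintype T] (H : SimpleGraph T) (ht : H.IsTree) (B : T → Set V)
    (hsize : ∀ t, Nat.card (B t) ≤ k + 1)
    (hcov : ∀ v, ∃ t, v ∈ B t)
    (hedge : ∀ ⦃u v⦄, G.Adj u v → ∃ t, u ∈ B t ∧ v ∈ B t)
    (hconv : ∀ (v : V) {x y : T} (P : H.Walk x y), P.IsPath → v ∈ B x → v ∈ B y →
      ∀ z ∈ P.support, v ∈ B z)
    (hq : (k : ℝ) + 1 ≤ q) :
    ∀ (N : ℕ) (R : Set V), R.ncard ≤ N → ∀ p : ℝ, (R.ncard : ℝ) * (k + 1) ≤ p * q →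
      ∃ S : Finset V, ↑S ⊆ R ∧ (S.card : ℝ) ≤ p ∧
        ∀ c : (G.induce (R \ ↑S)).ConnectedComponent, (Nat.card c.supp : ℝ) ≤ q := by
  classical
  have hq0 : (0 : ℝ) < q := lt_of_lt_of_le (by positivity) hq
  have base : ∀ (R : Set V), (R.ncard : ℝ) ≤ q → ∀ p : ℝ,
      (R.ncard : ℝ) * (k + 1) ≤ p * q →
      ∃ S : Finset V, ↑S ⊆ R ∧ (S.card : ℝ) ≤ p ∧
        ∀ c : (G.induce (R \ ↑S)).ConnectedComponent, (Nat.card c.supp : ℝ) ≤ q := by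
    intro R hRq p hp
    have hp0 : 0 ≤ p := by
      nlinarith [Nat.cast_nonneg (α := ℝ) R.ncard, mul_nonneg (Nat.cast_nonneg (α := ℝ) R.ncard) (by positivity : (0:ℝ) ≤ (k:ℝ)+1)]
    refine ⟨∅, by simp, by simpa, ?_⟩
    intro c
    have h1 : Nat.card c.supp = c.supp.ncard := Nat.card_coe_set_eq _
    have h2 : c.supp.ncard ≤ (Set.univ : Set ↥(R \ ↑(∅ : Finset V))).ncard :=
      Set.ncard_le_ncard (Set.subset_univ _) Set.finite_univ
    have h3 : (Set.univ : Set ↥(R \ ↑(∅ : Finset V))).ncard = (R \ ↑(∅ : Finset V)).ncard := by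
      rw [Set.ncard_univ, Nat.card_coe_set_eq]
    have h4 : (R \ ↑(∅ : Finset V)).ncard = R.ncard := by simp
    have : Nat.card c.supp ≤ R.ncard := by omega
    calc (Nat.card c.supp : ℝ) ≤ (R.ncard : ℝ) := by exact_mod_cast this
      _ ≤ q := hRq
  intro N
  induction N with
  | zero =>
    intro R hR p hp
    have : R.ncard = 0 := by omega
    exact base R (by rw [this]; simpa using hq0.le) p hp
  | succ N IH =>
    intro R hR p hp
    by_cases hsmall : (R.ncard : ℝ) ≤ q
    · exact base R hsmall p hp
    push_neg at hsmall
    set m := ⌊q⌋₊ with hmdef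
    have hm1 : k + 1 ≤ m := Nat.le_floor (by push_cast; linarith)
    have hmq : (m : ℝ) ≤ q := Nat.floor_le hq0.le
    have hqm1 : q < (m : ℝ) + 1 := by exact_mod_cast Nat.lt_floor_add_one q
    have hRm : m + 1 ≤ R.ncard := by
      have h5 : (m : ℝ) < (R.ncard : ℝ) := lt_of_le_of_lt hmq hsmall
      have h6 : m < R.ncard := by exact_mod_cast h5
      omega
    obtain ⟨r⟩ : Nonempty T := ht.isConnected.nonempty
    -- candidate sets
    set VR : T → Set V := fun t => {v | v ∈ R ∧ ∃ s, anc ht r t s ∧ v ∈ B s} with hVRdef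
    set st : T → Set T := fun t => {s | anc ht r t s} with hstdef
    have hVRr : VR r = R := by
      ext v
      simp only [hVRdef, Set.mem_setOf_eq]
      constructor
      · rintro ⟨h, _⟩; exact h
      · intro h
        obtain ⟨s, hs⟩ := hcov v
        exact ⟨h, s, anc_root ht r s, hs⟩
    have hcandr : m + 1 ≤ (VR r).ncard := by rw [hVRr]; exact hRm
    obtain ⟨t0, ht0mem, ht0min⟩ :=
      Finset.exists_min_image (Finset.univ.filter fun t => m + 1 ≤ (VR t).ncard)
        (fun t => (st t).ncard) ⟨r, by simp; omega⟩
    have ht0cand : m + 1 ≤ (VR t0).ncard := by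
      simpa using (Finset.mem_filter.mp ht0mem).2
    set A : Set V := VR t0 \ B t0 with hAdef
    -- (K1)
    have hK1 : ∀ v ∈ A, ∀ s, v ∈ B s → anc ht r t0 s ∧ s ≠ t0 := by
      rintro v ⟨⟨hvR, s0, hs0anc, hs0bag⟩, hvB⟩ s hs
      have hne : s ≠ t0 := by rintro rfl; exact hvB hs
      refine ⟨?_, hne⟩
      by_contra hna
      exact hvB (hconv v (upath ht s0 s) (upath_isPath ht s0 s) hs0bag hs _
        (sep_lemma ht hs0anc hna))
    -- (K2)
    have hgamma : ∀ v ∈ A, ∃ c, H.Adj t0 c ∧ anc ht r t0 c ∧ ∀ s, v ∈ B s → anc ht r c s := by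
      intro v hv
      obtain ⟨s0, hs0⟩ := hcov v
      obtain ⟨hanc0, hne0⟩ := hK1 v hv s0 hs0
      obtain ⟨c, hc⟩ := child_exists ht hanc0 (Ne.symm hne0)
      refine ⟨c, hc.1, hc.2.1, ?_⟩
      intro s hs
      obtain ⟨hancs, hnes⟩ := hK1 v hv s hs
      obtain ⟨c', hc'⟩ := child_exists ht hancs (Ne.symm hnes)
      have hcc : c = c' := by
        by_contra hne
        have := children_sep ht hc hc' hne
        exact (hv.2 : v ∉ B t0) (hconv v (upath ht s0 s) (upath_isPath ht s0 s) hs0 hs _ this)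
      rw [hcc]; exact hc'.2.2
    set γ : V → T := fun v => if h : v ∈ A then (hgamma v h).choose else r with hγdef
    have hγspec : ∀ v (h : v ∈ A), H.Adj t0 (γ v) ∧ anc ht r t0 (γ v) ∧
        ∀ s, v ∈ B s → anc ht r (γ v) s := by
      intro v h
      simp only [hγdef, dif_pos h]
      exact (hgamma v h).choose_spec
    -- (K3)
    have hK3 : ∀ u v, u ∈ A → v ∈ A → G.Adj u v → γ u = γ v := by
      intro u v hu hv hadj
      obtain ⟨s, hsu, hsv⟩ := hedge hadj
      exact child_eq ht ⟨(hγspec u hu).1, (hγspec u hu).2.1, (hγspec u hu).2.2 s hsu⟩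
        ⟨(hγspec v hv).1, (hγspec v hv).2.1, (hγspec v hv).2.2 s hsv⟩
    -- (K4)
    have hK4 : ∀ c : (G.induce A).ConnectedComponent, Nat.card c.supp ≤ m := by
      intro c
      by_contra hlt
      push_neg at hlt
      obtain ⟨v0, rfl⟩ := c.exists_rep
      have hconst : ∀ {a b : ↥A} (w : (G.induce A).Walk a b), γ ↑a = γ ↑b := by
        intro a b w
        induction w with
        | nil => rfl
        | @cons x y z hadj p ih =>
          have : G.Adj ↑x ↑y := by simpa [comap_adj] using hadj
          exact (hK3 _ _ x.2 y.2 this).trans ih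
      set c0 := γ ↑v0 with hc0def
      have hsupval : ∀ u : ↥A, u ∈ ((G.induce A).connectedComponentMk v0).supp →
          (u : V) ∈ VR c0 := by
        intro u hu
        have hr : (G.induce A).Reachable u v0 :=
          ConnectedComponent.exact ((ConnectedComponent.mem_supp_iff _ _).mp hu)
        obtain ⟨w⟩ := hr
        have hγu : γ ↑u = c0 := hconst w
        obtain ⟨s, hs⟩ := hcov (u : V)
        refine ⟨u.2.1.1, s, ?_, hs⟩
        rw [← hγu]
        exact (hγspec _ u.2).2.2 s hs
      have himg : (Subtype.val '' ((G.induce A).connectedComponentMk v0).supp) ⊆ VR c0 := by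
        rintro x ⟨u, hu, rfl⟩; exact hsupval u hu
      have hcard : m + 1 ≤ (VR c0).ncard := by
        have e1 : Nat.card ((G.induce A).connectedComponentMk v0).supp
            = (Subtype.val '' ((G.induce A).connectedComponentMk v0).supp).ncard := by
          rw [Set.ncard_image_of_injective _ Subtype.val_injective, Nat.card_coe_set_eq]
        have e2 := Set.ncard_le_ncard himg (Set.toFinite _)
        have hlt' : m < Nat.card ((G.induce A).connectedComponentMk v0).supp := hlt
        omega
      -- c0 is a candidate with strictly smaller subtree
      have hc0mem : c0 ∈ Finset.univ.filter fun t => m + 1 ≤ (VR t).ncard := by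
        simp [hcard]; omega
      have hadjc0 : H.Adj t0 c0 := (hγspec _ v0.2).1
      have hancc0 : anc ht r t0 c0 := (hγspec _ v0.2).2.1
      have hss : st c0 ⊂ st t0 := by
        constructor
        · intro s hs
          exact anc_trans ht hancc0 hs
        · intro hcon
          have h1 : anc ht r c0 t0 := hcon (anc_refl ht r t0)
          exact hadjc0.ne (anc_antisymm ht hancc0 h1)
      have := ht0min c0 hc0mem
      have hlt2 : (st c0).ncard < (st t0).ncard := Set.ncard_lt_ncard hss (Set.toFinite _)
      omega
    -- (K5)
    have hK5 : ∀ u ∈ A, ∀ v, G.Adj u v → v ∈ R → v ∉ B t0 → v ∈ A := by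
      intro u hu v hadj hvR hvB
      obtain ⟨s, hsu, hsv⟩ := hedge hadj
      exact ⟨⟨hvR, s, (hK1 u hu s hsu).1, hsv⟩, hvB⟩
    -- bookkeeping
    set X : Set V := B t0 ∩ R with hXdef
    set R' : Set V := R \ (A ∪ B t0) with hR'def
    have hXsub : X ⊆ R := Set.inter_subset_right
    have hAsub : A ⊆ R := fun v hv => hv.1.1
    have hbB : (B t0).ncard ≤ k + 1 := by
      rw [← Nat.card_coe_set_eq]; exact hsize t0
    have hb : X.ncard ≤ k + 1 :=
      le_trans (Set.ncard_le_ncard Set.inter_subset_left (Set.toFinite _)) hbB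
    have hVRsub : VR t0 ⊆ A ∪ B t0 := by
      intro v hv
      by_cases hvB : v ∈ B t0
      · exact Or.inr hvB
      · exact Or.inl ⟨hv, hvB⟩
    have ha1 : m + 1 ≤ A.ncard + (k + 1) := by
      have h2 := Set.ncard_le_ncard hVRsub (Set.toFinite _)
      have h3 := Set.ncard_union_le A (B t0)
      omega
    have hpart : R = (A ∪ X) ∪ R' := by
      ext v
      constructor
      · intro hv
        by_cases h1 : v ∈ A
        · exact Or.inl (Or.inl h1)
        by_cases h2 : v ∈ B t0
        · exact Or.inl (Or.inr ⟨h2, hv⟩)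
        · exact Or.inr ⟨hv, fun hc => ((Set.mem_union _ _ _).mp hc).elim h1 h2⟩
      · intro h
        simp only [Set.mem_union] at h
        rcases h with (h | h) | h
        · exact hAsub h
        · exact h.2
        · exact h.1
    have hdisj1 : Disjoint A X := by
      rw [Set.disjoint_left]
      rintro v hv ⟨hvB, _⟩
      exact hv.2 hvB
    have hdisj2 : Disjoint (A ∪ X) R' := by
      rw [Set.disjoint_left]
      rintro v (hv | hv) hv'
      · exact hv'.2 (Or.inl hv)
      · exact hv'.2 (Or.inr hv.1)
    have hcards : R.ncard = A.ncard + X.ncard + R'.ncard := by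
      rw [hpart, Set.ncard_union_eq hdisj2 (Set.toFinite _) (Set.toFinite _),
        Set.ncard_union_eq hdisj1 (Set.toFinite _) (Set.toFinite _)]
    have haA : 1 ≤ A.ncard := by omega
    have hR'le : R'.ncard ≤ N := by omega
    -- numeric step
    have harith : (R'.ncard : ℝ) * (k + 1) ≤ (p - X.ncard) * q := by
      have hnat : (X.ncard : ℝ) * ((m : ℝ) + 1) ≤ ((A.ncard : ℝ) + X.ncard) * (k + 1) := by
        have hA' : (m : ℝ) + 1 ≤ (A.ncard : ℝ) + (k + 1) := by exact_mod_cast ha1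
        have hb' : (X.ncard : ℝ) ≤ (k : ℝ) + 1 := by exact_mod_cast hb
        have hm' : (k : ℝ) + 1 ≤ (m : ℝ) := by exact_mod_cast hm1
        nlinarith
      have hcast : (R.ncard : ℝ) = (A.ncard : ℝ) + X.ncard + R'.ncard := by
        exact_mod_cast congrArg (Nat.cast : ℕ → ℝ) hcards
      have hbq : (X.ncard : ℝ) * q ≤ ((A.ncard : ℝ) + X.ncard) * (k + 1) := by
        nlinarith [Nat.cast_nonneg (α := ℝ) X.ncard]
      nlinarith
    obtain ⟨S', hS'sub, hS'card, hS'comps⟩ := IH R' hR'le (p - X.ncard) harith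
    set XF : Finset V := (Set.toFinite X).toFinset with hXFdef
    have hXFcoe : (XF : Set V) = X := Set.Finite.coe_toFinset _
    have hXFcard : XF.card = X.ncard := by rw [← hXFcoe, Set.ncard_coe_finset]
    refine ⟨XF ∪ S', ?_, ?_, ?_⟩
    · rw [Finset.coe_union, hXFcoe]
      exact Set.union_subset hXsub (le_trans hS'sub (Set.diff_subset.trans (by intro v hv; exact hv)))
    · calc ((XF ∪ S').card : ℝ) ≤ (XF.card : ℝ) + S'.card := by
            exact_mod_cast Finset.card_union_le _ _
        _ ≤ (X.ncard : ℝ) + (p - X.ncard) := by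
            rw [hXFcard]
            linarith [hS'card]
        _ = p := by ring
    · intro c
      have hseteq : R \ ↑(XF ∪ S') = A ∪ (R' \ ↑S') := by
        rw [Finset.coe_union, hXFcoe]
        ext v
        constructor
        · rintro ⟨hvR, hvn⟩
          by_cases h1 : v ∈ A
          · exact Or.inl h1
          · refine Or.inr ⟨⟨hvR, ?_⟩, fun hc => hvn (Or.inr hc)⟩
            rintro (hc | hc)
            · exact h1 hc
            · exact hvn (Or.inl ⟨hc, hvR⟩)
        · rintro (hv | hv)
          · refine ⟨hAsub hv, ?_⟩
            rintro (hc | hc)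
            · exact hdisj1.le_bot ⟨hv, hc⟩
            · exact (hS'sub hc).2 (Or.inl hv)
          · refine ⟨hv.1.1, ?_⟩
            rintro (hc | hc)
            · exact hv.1.2 (Or.inr hc.1)
            · exact hv.2 hc
      revert c
      set W : Set V := R \ ↑(XF ∪ S') with hWdef
      intro c
      have hWsub : ∀ u : ↥W, (u : V) ∈ A ∪ (R' \ ↑S') := fun u => hseteq ▸ u.2
      have hcross : ∀ {x y : ↥W} (w : (G.induce W).Walk x y),
          (x : V) ∈ A → (y : V) ∉ A → False := by
        intro x y w hx hy
        obtain ⟨a, b, hab, haA, hbA⟩ := walk_cross w hx hy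
        have hb' : (b : V) ∈ R' \ ↑S' := (hWsub b).resolve_left hbA
        have hbR : (b : V) ∈ R := hb'.1.1
        have hbB : (b : V) ∉ B t0 := fun hc => hb'.1.2 (Or.inr hc)
        exact hbA (hK5 _ haA _ hab hbR hbB)
      obtain ⟨v0, hv0⟩ := c.exists_rep
      have hv0supp : v0 ∈ c.supp := (ConnectedComponent.mem_supp_iff _ _).mpr hv0
      have hwalk : ∀ u : ↥W, u ∈ c.supp → (G.induce W).Reachable v0 u := by
        intro u hu
        exact (ConnectedComponent.exact
          (((ConnectedComponent.mem_supp_iff _ _).mp hu).trans hv0.symm)).symm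
      by_cases hv0A : (v0 : V) ∈ A
      · have hsub : ∀ u : ↥W, u ∈ c.supp → (u : V) ∈ A := by
          intro u hu
          by_contra hnA
          exact hcross (hwalk u hu).some hv0A hnA
        obtain ⟨c1, hc1⟩ := comp_transfer (fun x hx => hseteq ▸ Or.inl hx : A ⊆ W) c hsub
        have e1 : Nat.card c.supp = (Subtype.val '' c.supp).ncard := by
          rw [Set.ncard_image_of_injective _ Subtype.val_injective, Nat.card_coe_set_eq]
        have e2 : (Subtype.val '' c.supp).ncard ≤ (Subtype.val '' c1.supp).ncard :=
          Set.ncard_le_ncard hc1 (Set.toFinite _)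
        have e3 : (Subtype.val '' c1.supp).ncard = Nat.card c1.supp := by
          rw [Set.ncard_image_of_injective _ Subtype.val_injective, Nat.card_coe_set_eq]
        have e4 := hK4 c1
        have e5 : Nat.card c.supp ≤ m := by omega
        calc (Nat.card c.supp : ℝ) ≤ (m : ℝ) := by exact_mod_cast e5
          _ ≤ q := hmq
      · have hsub : ∀ u : ↥W, u ∈ c.supp → (u : V) ∈ R' \ ↑S' := by
          intro u hu
          by_contra hnA
          have huA : (u : V) ∈ A := (hWsub u).resolve_right hnA
          exact hcross ((hwalk u hu).symm).some huA hv0A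
        obtain ⟨c1, hc1⟩ := comp_transfer
          (fun x hx => hseteq ▸ Or.inr hx : R' \ ↑S' ⊆ W) c hsub
        have e1 : Nat.card c.supp = (Subtype.val '' c.supp).ncard := by
          rw [Set.ncard_image_of_injective _ Subtype.val_injective, Nat.card_coe_set_eq]
        have e2 : (Subtype.val '' c.supp).ncard ≤ (Subtype.val '' c1.supp).ncard :=
          Set.ncard_le_ncard hc1 (Set.toFinite _)
        have e3 : (Subtype.val '' c1.supp).ncard = Nat.card c1.supp := by
          rw [Set.ncard_image_of_injective _ Subtype.val_injective, Nat.card_coe_set_eq]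
        have e4 := hS'comps c1
        have e5 : Nat.card c.supp ≤ Nat.card c1.supp := by omega
        calc (Nat.card c.supp : ℝ) ≤ (Nat.card c1.supp : ℝ) := by exact_mod_cast e5
          _ ≤ q := e4


theorem treewidth_separator_real (k n : ℕ) (hk : 0 < k) (hn0 : 0 < n)
    (p q : ℝ) (hp : 0 < p) (hq : 0 < q)
    (hineq : (n : ℝ) * (k + 1) ≤ p * q) (hpk : (k : ℝ) + 1 ≤ p)
    (V : Type) [Fintype V] (hcard : Fintype.card V = n)
    (G : SimpleGraph V) (htw : twLE G k) :
    ∃ S : Finset V, (S.card : ℝ) ≤ p ∧ CompsLER G (↑S) q := by   classical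
  by_cases hpn : (n : ℝ) ≤ p
  · refine ⟨Finset.univ, ?_, ?_⟩
    · rw [Finset.card_univ, hcard]; exact hpn
    · intro c
      exfalso
      obtain ⟨v, _⟩ := c.exists_rep
      exact v.2 (by simp)
  · push_neg at hpn
    have hqk : (k : ℝ) + 1 ≤ q := by
      have h1 : p * ((k : ℝ) + 1) < (n : ℝ) * ((k : ℝ) + 1) := by nlinarith
      have h2 : p * ((k : ℝ) + 1) < p * q := lt_of_lt_of_le h1 hineq
      have h3 := (mul_lt_mul_iff_right₀ hp).mp h2
      linarith
    have hV : Nonempty V := by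
      rw [← Fintype.card_pos_iff, hcard]; exact hn0
    obtain ⟨T, hfin, H, htree, B, hsize, hcov, hedge, hconv⟩ := exists_nice_decomp htw
    obtain ⟨S, hsub, hcardS, hcomps⟩ := core G k q H htree B hsize hcov hedge hconv hqk
      (Fintype.card V) Set.univ (by rw [Set.ncard_univ, Nat.card_eq_fintype_card]) p
      (by rw [Set.ncard_univ, Nat.card_eq_fintype_card, hcard]; exact hineq)
    refine ⟨S, hcardS, ?_⟩
    show ∀ c : (G.induce ((↑S : Set V)ᶜ)).ConnectedComponent, (Nat.card c.supp : ℝ) ≤ q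
    rw [Set.compl_eq_univ_diff]
    exact hcomps
end

section
/- For every graph G, tw(G) ≤ 2·tpw(G) − 1, where tpw(G) is the tree-partition-width: the minimum m such that G has a T-partition of width m for some tree T (a partition of V(G) indexed by the vertices of a tree T with parts of size at most m such that edges of G go within parts or between parts indexed by adjacent tree vertices). -/
open SimpleGraph

theorem tw_le_two_tpw_sub_one (V : Type) (G : SimpleGraph V) (m : ℕ) (hm : 0 < m)
    (h : tpwLE G m) : twLE G (2 * m - 1) := by
  obtain ⟨T, TG, P, hTree, ⟨hpart, hedge⟩, hsize⟩ := h
  classical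
  obtain ⟨r⟩ := hTree.isConnected.nonempty
  have hpath : ∀ t, ∃! p : TG.Walk t r, p.IsPath := fun t => hTree.existsUnique_path t r
  set p : ∀ t, TG.Walk t r := fun t => (hpath t).exists.choose with hpdef
  have hp : ∀ t, (p t).IsPath := fun t => (hpath t).exists.choose_spec
  have hup : ∀ t (q : TG.Walk t r), q.IsPath → q = p t :=
    fun t q hq => ((hpath t).unique hq (hp t))
  set par : T → T := fun t => (p t).getVert 1 with hpar
  have hparr : par r = r := by
    have : (Walk.nil : TG.Walk r r) = p r := hup r Walk.nil Walk.IsPath.nil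
    rw [hpar]
    simp only [← this]
    rfl
  have hadj : ∀ t, t ≠ r → TG.Adj t (par t) := by
    intro t ht
    obtain ⟨w, hw, q, hq⟩ := Walk.exists_eq_cons_of_ne ht (p t)
    have : par t = w := by simp [hpar, hq, Walk.getVert_cons_succ, Walk.getVert_zero]
    rwa [this]
  have key : ∀ x y (hxy : TG.Adj x y), x ∉ (p y).support → par x = y := by
    intro x y hxy hns
    have hP : (Walk.cons hxy (p y)).IsPath := (Walk.cons_isPath_iff _ _).mpr ⟨hp y, hns⟩
    have he := hup x _ hP
    simp [hpar, ← he, Walk.getVert_cons_succ, Walk.getVert_zero]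
  have hedgepar : ∀ x y, TG.Adj x y → par x = y ∨ par y = x := by
    intro x y hxy
    by_cases hx : x ∈ (p y).support
    · by_cases hy : y ∈ (p x).support
      · exfalso
        have hdrop : ((p x).dropUntil y hy).IsPath := (hp x).dropUntil hy
        have heq : (p x).dropUntil y hy = p y := hup y _ hdrop
        have hx' : x ∈ ((p x).dropUntil y hy).support := heq ▸ hx
        have hxt : x ∈ ((p x).dropUntil y hy).support.tail := by
          rw [Walk.support_eq_cons] at hx'
          rcases List.mem_cons.mp hx' with h1 | h1
          · exact absurd h1 hxy.ne
          · exact h1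
        have hxh : x ∈ ((p x).takeUntil y hy).support := Walk.start_mem_support _
        have hnd : ((p x).support).Nodup := (hp x).support_nodup
        rw [← Walk.take_spec (p x) hy, Walk.support_append, List.nodup_append] at hnd
        exact hnd.2.2 x hxh x hxt rfl
      · exact Or.inr (key y x hxy.symm hy)
    · exact Or.inl (key x y hxy hx)
  refine ⟨T, TG, fun t => P t ∪ P (par t), ⟨hTree, ?_, ?_, ?_⟩, ?_⟩
  · intro v
    obtain ⟨x, hx, -⟩ := hpart v
    exact ⟨x, Or.inl hx⟩
  · intro u v huv
    obtain ⟨x, hx, -⟩ := hpart u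
    obtain ⟨y, hy, -⟩ := hpart v
    rcases hedge huv hx hy with rfl | hxy
    · exact ⟨x, Or.inl hx, Or.inl hy⟩
    · rcases hedgepar x y hxy with he | he
      · exact ⟨x, Or.inl hx, Or.inr (by rw [he]; exact hy)⟩
      · exact ⟨y, Or.inr (by rw [he]; exact hx), Or.inl hy⟩
  · intro v
    obtain ⟨x, hx, hux⟩ := hpart v
    have hxS : x ∈ {t | v ∈ P t ∪ P (par t)} := Or.inl hx
    have claim : ∀ t, v ∈ P t ∪ P (par t) → t = x ∨ TG.Adj t x := by
      intro t ht
      rcases ht with h1 | h1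
      · exact Or.inl (hux t h1)
      · have hpt : par t = x := hux _ h1
        by_cases htx : t = x
        · exact Or.inl htx
        · have htr : t ≠ r := by
            rintro rfl
            exact htx (hpt.symm.trans hparr).symm
          exact Or.inr (hpt ▸ hadj t htr)
    have reach : ∀ c : {t | v ∈ P t ∪ P (par t)},
        (TG.induce {t | v ∈ P t ∪ P (par t)}).Reachable c ⟨x, hxS⟩ := by
      rintro ⟨t, ht⟩
      rcases claim t ht with rfl | hA
      · rfl
      · exact SimpleGraph.Adj.reachable (by exact hA)
    have hne : Nonempty ↑{t | v ∈ P t ∪ P (par t)} := ⟨⟨x, hxS⟩⟩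
    exact ⟨fun a b => (reach a).trans (reach b).symm⟩
  · intro t
    have h1 := hsize t
    have h2 := hsize (par t)
    show Nat.card ↑(P t ∪ P (par t)) ≤ 2 * m - 1 + 1
    rw [Nat.card_coe_set_eq] at h1 h2 ⊢
    have := Set.ncard_union_le (P t) (P (par t))
    omega
end

section
/- Let G be a hereditary graph class with sep ≤ c·n^(1−ε) for constants c > 0, ε ∈ (0,1). Then for every positive integer d, every n-vertex G ∈ G is a subgraph of H ⊠ K_m for some graph H with tree-depth at most d, where m ≤ (c·2^ε/(2^ε − 1))·n^((1−ε)/(1−ε^d)). -/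
open SimpleGraph

lemma card_le_aux {α β : Type*} [Finite β] (A : Set α) (B : Set β) (u : β → α)
    (h : ∀ a ∈ A, ∃ b ∈ B, u b = a) :
    Nat.card A ≤ Nat.card B := by
  have h' : ∀ a : A, ∃ b : B, u b.1 = a.1 := fun a => by
    obtain ⟨b, hb, hb2⟩ := h a.1 a.2; exact ⟨⟨b, hb⟩, hb2⟩
  choose f hf using h'
  refine Nat.card_le_card_of_injective f fun a a' he => ?_
  apply Subtype.ext
  rw [← hf a, ← hf a', he]

lemma reach_mono_s16 {V : Type*} (G : SimpleGraph V) {A B : Set V} (h : A ⊆ B) {u v : ↥A}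
    (r : (G.induce A).Reachable u v) :
    (G.induce B).Reachable ⟨u.1, h u.2⟩ ⟨v.1, h v.2⟩ :=
  Reachable.map ⟨Set.inclusion h, fun {_ _} hab => hab⟩ r

lemma walk_transfer {V : Type*} (G : SimpleGraph V) (S X : Set V) (hSX : S ⊆ X)
    (K : (G.induce Sᶜ).ConnectedComponent)
    (XK : Set ↥K.supp)
    (himg : ∀ z : ↥K.supp, z ∈ XK → (z.1.1 : V) ∈ X) :
    ∀ {u v : ↥Xᶜ} (_ : (G.induce Xᶜ).Walk u v)
      (a b : ↥(XKᶜ : Set ↥K.supp)),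
      (a.1.1.1 : V) = u.1 → (b.1.1.1 : V) = v.1 →
      (((G.induce Sᶜ).induce K.supp).induce XKᶜ).Reachable a b := by
  intro u v p
  induction p with
  | nil =>
    intro a b ha hb
    have : a = b := by
      apply Subtype.ext; apply Subtype.ext; apply Subtype.ext; rw [ha, hb]
    rw [this]
  | @cons u w v h p ih =>
    intro a b ha hb
    have hGuw : G.Adj u.1 w.1 := h
    have hwS : (w.1 : V) ∈ Sᶜ := fun hw => w.2 (hSX hw)
    have hadj' : (G.induce Sᶜ).Adj a.1.1 ⟨w.1, hwS⟩ := by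
      show G.Adj a.1.1.1 w.1
      rw [ha]; exact hGuw
    have hwK : (⟨w.1, hwS⟩ : ↥Sᶜ) ∈ K.supp := by
      rw [SimpleGraph.ConnectedComponent.mem_supp_iff]
      have h2 := a.1.2
      rw [SimpleGraph.ConnectedComponent.mem_supp_iff] at h2
      rw [← h2]
      exact (SimpleGraph.ConnectedComponent.sound hadj'.reachable).symm
    have hwXK : (⟨⟨w.1, hwS⟩, hwK⟩ : ↥K.supp) ∉ XK := by
      intro hmem
      exact w.2 (himg _ hmem)
    set a' : ↥(XKᶜ : Set ↥K.supp) := ⟨⟨⟨w.1, hwS⟩, hwK⟩, hwXK⟩ with ha'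
    have hTadj : (((G.induce Sᶜ).induce K.supp).induce XKᶜ).Adj a a' := by
      show G.Adj a.1.1.1 a'.1.1.1
      rw [ha]; exact hGuw
    exact hTadj.reachable.trans (ih a' b rfl hb)

lemma const_facts (c ε : ℝ) (hc : 0 < c) (hε0 : 0 < ε) (hε1 : ε < 1) :
    1 < (2:ℝ)^ε ∧ c ≤ c * 2^ε/(2^ε - 1) ∧ (c * 2^ε/(2^ε - 1) - c) * 2^ε = c * 2^ε/(2^ε - 1) := by
  have h2 : (1:ℝ) < 2^ε := by
    rw [show (1:ℝ) = (2:ℝ)^(0:ℝ) by simp]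
    exact Real.rpow_lt_rpow_of_exponent_lt one_lt_two hε0
  have hne : (2:ℝ)^ε - 1 ≠ 0 := by linarith
  have h2p : (0:ℝ) < 2^ε := by linarith
  refine ⟨h2, ?_, ?_⟩
  · rw [le_div_iff₀ (by linarith)]
    nlinarith
  · field_simp
    ring

set_option maxHeartbeats 1000000 in
lemma halve (𝒢 : ∀ V : Type, SimpleGraph V → Prop) (hher : Hereditary 𝒢)
    (c ε : ℝ) (hc : 0 < c) (hε0 : 0 < ε) (hε1 : ε < 1)
    (hsep : SepBound 𝒢 c ε) (s : ℝ) (hs : 1 ≤ s) :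
    ∀ (n : ℕ) (V : Type) [Fintype V] (G : SimpleGraph V), 𝒢 V G → Fintype.card V ≤ n →
      ∃ X : Finset V, CompsLER G ↑X s ∧
        ((X.card : ℝ) ≤ if (Fintype.card V : ℝ) ≤ s then 0 else
          c * 2^ε/(2^ε - 1) * (Fintype.card V : ℝ) * s^(-ε)
            - (c * 2^ε/(2^ε - 1) - c) * (Fintype.card V : ℝ)^(1-ε)) := by
  classical
  obtain ⟨h2e, hcC, hkey⟩ := const_facts c ε hc hε0 hε1
  set C : ℝ := c * 2^ε/(2^ε - 1) with hC
  have hs0 : (0:ℝ) < s := lt_of_lt_of_le one_pos hs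
  intro n
  induction n with
  | zero =>
    intro V _ G hG hcard
    have hVempty : IsEmpty V := by
      rw [← Fintype.card_eq_zero_iff]; omega
    refine ⟨∅, ?_, ?_⟩
    · intro cc
      obtain ⟨v, _⟩ := cc.exists_rep
      exact (hVempty.false v.1).elim
    · have hcv : Fintype.card V = 0 := by omega
      have : (Fintype.card V : ℝ) ≤ s := by rw [hcv]; simpa using hs0.le
      rw [if_pos this]
      simp
  | succ n ih =>
    intro V _ G hG hcard
    by_cases hns : (Fintype.card V : ℝ) ≤ s
    · refine ⟨∅, ?_, ?_⟩
      · intro cc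
        have h1 : Nat.card cc.supp ≤ Nat.card ↥((↑(∅:Finset V):Set V)ᶜ) :=
          Nat.card_le_card_of_injective Subtype.val Subtype.val_injective
        have h2 : Nat.card ↥((↑(∅:Finset V):Set V)ᶜ) ≤ Fintype.card V := by
          rw [← Nat.card_eq_fintype_card]
          exact Nat.card_le_card_of_injective Subtype.val Subtype.val_injective
        calc (Nat.card cc.supp : ℝ) ≤ (Fintype.card V : ℝ) := by exact_mod_cast h1.trans h2
          _ ≤ s := hns
      · rw [if_pos hns]; simp
    · push_neg at hns
      have hN1 : (1:ℝ) ≤ (Fintype.card V : ℝ) := le_trans hs hns.le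
      set N : ℝ := (Fintype.card V : ℝ) with hNdef
      have hN0 : (0:ℝ) < N := lt_of_lt_of_le one_pos hN1
      obtain ⟨S, hScard, hScomp⟩ := hsep V G hG
      set G' := G.induce (↑S:Set V)ᶜ with hG'def
      have hGin : 𝒢 _ G' := hher V G hG _
      -- recursion on components
      have hrec : ∀ K : G'.ConnectedComponent, ∃ XK : Finset ↥K.supp,
          CompsLER (G'.induce K.supp) ↑XK s ∧
          ((XK.card : ℝ) ≤ if (Fintype.card ↥K.supp : ℝ) ≤ s then 0 else
            C * (Fintype.card ↥K.supp : ℝ) * s^(-ε)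
              - (C - c) * (Fintype.card ↥K.supp : ℝ)^(1-ε)) := by
        intro K
        refine ih ↥K.supp (G'.induce K.supp) (hher _ _ hGin K.supp) ?_
        have h1 : (Nat.card K.supp : ℝ) ≤ N / 2 := hScomp K
        rw [Nat.card_eq_fintype_card] at h1
        have h2 : (Fintype.card ↥K.supp : ℝ) ≤ (n:ℝ) := by
          have hNn : N ≤ (n:ℝ) + 1 := by rw [hNdef]; exact_mod_cast hcard
          have h2N : (2:ℝ) ≤ N := by
            by_contra hlt
            push_neg at hlt
            rw [hNdef] at hlt
            have h3 : Fintype.card V < 2 := by exact_mod_cast hlt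
            have h4 : Fintype.card V ≤ 1 := by omega
            have h5 : (Fintype.card V : ℝ) ≤ 1 := by exact_mod_cast h4
            rw [← hNdef] at h5
            linarith
          linarith
        exact_mod_cast h2
      choose XK hXKcomp hXKcard using hrec
      haveI : Finite G'.ConnectedComponent :=
        Finite.of_surjective G'.connectedComponentMk (fun cc => cc.exists_rep)
      haveI : Fintype G'.ConnectedComponent := Fintype.ofFinite _
      set X : Finset V :=
        S ∪ Finset.univ.biUnion (fun K : G'.ConnectedComponent =>
          (XK K).image (fun z => (z.1.1 : V))) with hXdef
      have hSsubX : (↑S : Set V) ⊆ ↑X := by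
        intro x hx
        simp only [hXdef, Finset.coe_union, Set.mem_union]
        exact Or.inl hx
      have himgX : ∀ K : G'.ConnectedComponent, ∀ z : ↥K.supp,
          z ∈ XK K → (z.1.1 : V) ∈ (↑X : Set V) := by
        intro K z hz
        simp only [hXdef, Finset.coe_union, Set.mem_union, Finset.mem_coe,
          Finset.mem_biUnion, Finset.mem_image]
        exact Or.inr ⟨K, Finset.mem_univ K, z, hz, rfl⟩
      have hnotX : ∀ y : V, y ∉ (↑X : Set V) → y ∉ (↑S : Set V) :=
        fun y hy hyS => hy (hSsubX hyS)
      -- the lifting of a vertex outside X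
      have hliftK : ∀ (y : ↥((↑X:Set V)ᶜ)) (hyS : (y.1:V) ∈ (↑S:Set V)ᶜ)
          (K : G'.ConnectedComponent) (hy : (⟨y.1, hyS⟩ : ↥(↑S:Set V)ᶜ) ∈ K.supp),
          (⟨⟨y.1, hyS⟩, hy⟩ : ↥K.supp) ∉ XK K := by
        intro y hyS K hy hmem
        exact y.2 (himgX K _ hmem)
      refine ⟨X, ?_, ?_⟩
      · -- components of G - X are small
        intro cc
        obtain ⟨v, hv⟩ := cc.exists_rep
        have hvS : (v.1:V) ∈ (↑S:Set V)ᶜ := fun hmem => v.2 (hSsubX hmem)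
        set v1 : ↥((↑S:Set V)ᶜ) := ⟨v.1, hvS⟩ with hv1
        set K := G'.connectedComponentMk v1 with hK
        have hv2m : v1 ∈ K.supp := by rw [ConnectedComponent.mem_supp_iff]
        set v2 : ↥K.supp := ⟨v1, hv2m⟩ with hv2
        have hv3m : v2 ∉ XK K := hliftK v hvS K hv2m
        have hv3m' : v2 ∈ ((↑(XK K) : Set ↥K.supp)ᶜ) := by
          simpa using hv3m
        set v3 : ↥((↑(XK K) : Set ↥K.supp)ᶜ) := ⟨v2, hv3m'⟩ with hv3
        set cc3 := ((G'.induce K.supp).induce ((↑(XK K))ᶜ)).connectedComponentMk v3 with hcc3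
        refine le_trans ?_ (hXKcomp K cc3)
        have hinj : Nat.card cc.supp ≤ Nat.card cc3.supp := by
          apply card_le_aux _ _
            (fun (y : ↥((↑(XK K) : Set ↥K.supp)ᶜ)) =>
              (⟨y.1.1.1, ?_⟩ : ↥((↑X:Set V)ᶜ)))
          · -- main property
            intro a ha
            rw [ConnectedComponent.mem_supp_iff] at ha
            have hreach : (G.induce (↑X:Set V)ᶜ).Reachable a v :=
              ConnectedComponent.exact (ha.trans hv.symm)
            have haS : (a.1:V) ∈ (↑S:Set V)ᶜ := fun hmem => a.2 (hSsubX hmem)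
            have hreach' : G'.Reachable ⟨a.1, haS⟩ v1 := by
              have := reach_mono_s16 G (Set.compl_subset_compl.mpr hSsubX) hreach
              exact this
            have haK : (⟨a.1, haS⟩ : ↥((↑S:Set V)ᶜ)) ∈ K.supp := by
              rw [ConnectedComponent.mem_supp_iff, hK]
              exact ConnectedComponent.sound hreach'
            have haXK : (⟨⟨a.1, haS⟩, haK⟩ : ↥K.supp) ∉ XK K := hliftK a haS K haK
            have haXK' : (⟨⟨a.1, haS⟩, haK⟩ : ↥K.supp) ∈ ((↑(XK K) : Set ↥K.supp)ᶜ) := by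
              simpa using haXK
            refine ⟨⟨⟨⟨a.1, haS⟩, haK⟩, haXK'⟩, ?_, rfl⟩
            rw [ConnectedComponent.mem_supp_iff, hcc3]
            apply ConnectedComponent.sound
            exact walk_transfer G ↑S ↑X hSsubX K ↑(XK K)
              (fun z hz => himgX K z (by simpa using hz)) hreach.some _ _ rfl rfl
          · -- membership proof for the map
            intro hmem
            simp only [hXdef, Finset.coe_union, Set.mem_union, Finset.mem_coe,
              Finset.mem_biUnion, Finset.mem_image] at hmem
            rcases hmem with hmem | ⟨K', _, z, hz, hzeq⟩
            · exact y.1.1.2 hmem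
            · have hzval : (z.1 : ↥((↑S:Set V)ᶜ)) = y.1.1 := Subtype.ext hzeq
              have hK' : K' = K := by
                have h1 : G'.connectedComponentMk z.1 = K' := z.2
                have h2 : G'.connectedComponentMk y.1.1 = K := y.1.2
                rw [← h1, hzval, h2]
              subst hK'
              have hzy : z = y.1 := Subtype.ext hzval
              have hyn : (y.1 : ↥K.supp) ∉ XK K := fun hmem => y.2 (Finset.mem_coe.mpr hmem)
              exact hyn (hzy ▸ hz)
        exact_mod_cast hinj
      · -- cardinality bound
        rw [if_neg (not_le.mpr hns)]
        rw [← hNdef] at hScard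
        have hC0 : 0 ≤ C := le_trans hc.le hcC
        have hXcard1 : (X.card : ℝ) ≤ (S.card : ℝ) + ∑ K : G'.ConnectedComponent, ((XK K).card : ℝ) := by
          have h1 : X.card ≤ S.card + (Finset.univ.biUnion (fun K : G'.ConnectedComponent =>
              (XK K).image (fun z => (z.1.1 : V)))).card := Finset.card_union_le _ _
          have h2 : (Finset.univ.biUnion (fun K : G'.ConnectedComponent =>
              (XK K).image (fun z => (z.1.1 : V)))).card
              ≤ ∑ K : G'.ConnectedComponent, ((XK K).image (fun z => (z.1.1 : V))).card :=
            Finset.card_biUnion_le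
          have h3 : ∑ K : G'.ConnectedComponent, ((XK K).image (fun z => (z.1.1 : V))).card
              ≤ ∑ K : G'.ConnectedComponent, (XK K).card :=
            Finset.sum_le_sum (fun K _ => Finset.card_image_le)
          have h4 : X.card ≤ S.card + ∑ K : G'.ConnectedComponent, (XK K).card := by omega
          push_cast
          exact_mod_cast h4
        have hsupp_sum : ∑ K : G'.ConnectedComponent, (Fintype.card ↥K.supp : ℝ) ≤ N := by
          have e1 : ∀ K : G'.ConnectedComponent, Fintype.card ↥K.supp
              = (Finset.univ.filter
                  (fun x : ↥((↑S:Set V)ᶜ) => G'.connectedComponentMk x = K)).card := by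
            intro K
            rw [← Set.toFinset_card]
            congr 1
            ext x
            simp [ConnectedComponent.mem_supp_iff]
          have e2 : ∑ K : G'.ConnectedComponent, (Finset.univ.filter
                  (fun x : ↥((↑S:Set V)ᶜ) => G'.connectedComponentMk x = K)).card
              = Fintype.card ↥((↑S:Set V)ᶜ) := by
            rw [← Finset.card_univ]
            exact (Finset.card_eq_sum_card_fiberwise (fun x _ => Finset.mem_univ _)).symm
          have e3 : Fintype.card ↥((↑S:Set V)ᶜ) ≤ Fintype.card V := by
            rw [← Nat.card_eq_fintype_card, ← Nat.card_eq_fintype_card]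
            exact Nat.card_le_card_of_injective Subtype.val Subtype.val_injective
          have e4 : ∑ K : G'.ConnectedComponent, Fintype.card ↥K.supp ≤ Fintype.card V := by
            calc ∑ K : G'.ConnectedComponent, Fintype.card ↥K.supp
                = ∑ K : G'.ConnectedComponent, (Finset.univ.filter
                  (fun x : ↥((↑S:Set V)ᶜ) => G'.connectedComponentMk x = K)).card :=
                  Finset.sum_congr rfl (fun K _ => e1 K)
              _ = Fintype.card ↥((↑S:Set V)ᶜ) := e2
              _ ≤ Fintype.card V := e3
          rw [hNdef]
          push_cast
          exact_mod_cast e4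
        have hNsplit : N^(1-ε) = N * N^(-ε) := by
          rw [show (1-ε) = 1 + (-ε) by ring, Real.rpow_add hN0, Real.rpow_one]
        by_cases hbig : ∀ K : G'.ConnectedComponent, (Fintype.card ↥K.supp : ℝ) ≤ s
        · have hsum0 : ∑ K : G'.ConnectedComponent, ((XK K).card:ℝ) ≤ 0 :=
            Finset.sum_nonpos (fun K _ => by
              have h5 := hXKcard K; rwa [if_pos (hbig K)] at h5)
          have hX2 : (X.card:ℝ) ≤ c * N^(1-ε) := by linarith
          have hmono : N^(-ε) ≤ s^(-ε) :=
            Real.rpow_le_rpow_of_nonpos hs0 hns.le (by linarith)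
          have h6 : C * N^(1-ε) ≤ C * N * s^(-ε) := by
            rw [hNsplit, ← mul_assoc]
            exact mul_le_mul_of_nonneg_left hmono (by positivity)
          have h7 : c * N^(1-ε) + (C - c) * N^(1-ε) = C * N^(1-ε) := by ring
          linarith
        · push_neg at hbig
          obtain ⟨K₀, hK₀⟩ := hbig
          have hhalf : (Fintype.card ↥K₀.supp : ℝ) ≤ N/2 := by
            have h5 := hScomp K₀; rwa [Nat.card_eq_fintype_card, ← hNdef] at h5
          have hs2 : s < N/2 := lt_of_lt_of_le hK₀ hhalf
          set Kco : ℝ := C * s^(-ε) - (C-c) * (N/2)^(-ε) with hKco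
          have hmono2 : (N/2)^(-ε) ≤ s^(-ε) :=
            Real.rpow_le_rpow_of_nonpos hs0 hs2.le (by linarith)
          have hKco0 : 0 ≤ Kco := by
            have h5 : (C - c) * (N/2)^(-ε) ≤ (C-c) * s^(-ε) :=
              mul_le_mul_of_nonneg_left hmono2 (by linarith)
            have h6 : (0:ℝ) ≤ c * s^(-ε) := by positivity
            have h7 : C * s^(-ε) - (C-c) * s^(-ε) = c * s^(-ε) := by ring
            rw [hKco]
            linarith
          have hper : ∀ K : G'.ConnectedComponent,
              ((XK K).card : ℝ) ≤ (Fintype.card ↥K.supp : ℝ) * Kco := by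
            intro K
            have hc1 := hXKcard K
            by_cases hKs : (Fintype.card ↥K.supp : ℝ) ≤ s
            · rw [if_pos hKs] at hc1
              have h5 : (0:ℝ) ≤ (Fintype.card ↥K.supp : ℝ) * Kco :=
                mul_nonneg (by positivity) hKco0
              linarith
            · rw [if_neg hKs] at hc1
              push_neg at hKs
              have hk0 : (0:ℝ) < (Fintype.card ↥K.supp : ℝ) := lt_trans hs0 hKs
              have hkhalf : (Fintype.card ↥K.supp : ℝ) ≤ N/2 := by
                have h5 := hScomp K; rwa [Nat.card_eq_fintype_card, ← hNdef] at h5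
              have hsplit : (Fintype.card ↥K.supp : ℝ)^(1-ε)
                  = (Fintype.card ↥K.supp : ℝ) * (Fintype.card ↥K.supp : ℝ)^(-ε) := by
                rw [show (1-ε) = 1 + (-ε) by ring, Real.rpow_add hk0, Real.rpow_one]
              have hmono3 : (N/2)^(-ε) ≤ (Fintype.card ↥K.supp : ℝ)^(-ε) :=
                Real.rpow_le_rpow_of_nonpos hk0 hkhalf (by linarith)
              have h4 : (C-c) * ((Fintype.card ↥K.supp : ℝ) * (N/2)^(-ε))
                  ≤ (C-c) * (Fintype.card ↥K.supp : ℝ)^(1-ε) := by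
                rw [hsplit]
                refine mul_le_mul_of_nonneg_left ?_ (by linarith)
                exact mul_le_mul_of_nonneg_left hmono3 hk0.le
              have hring : (Fintype.card ↥K.supp : ℝ) * Kco
                  = C * (Fintype.card ↥K.supp : ℝ) * s^(-ε)
                    - (C-c) * ((Fintype.card ↥K.supp : ℝ) * (N/2)^(-ε)) := by
                rw [hKco]; ring
              calc ((XK K).card : ℝ)
                  ≤ C * (Fintype.card ↥K.supp : ℝ) * s^(-ε)
                    - (C-c) * (Fintype.card ↥K.supp : ℝ)^(1-ε) := hc1
                _ ≤ C * (Fintype.card ↥K.supp : ℝ) * s^(-ε)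
                    - (C-c) * ((Fintype.card ↥K.supp : ℝ) * (N/2)^(-ε)) :=
                  sub_le_sub_left h4 _
                _ = (Fintype.card ↥K.supp : ℝ) * Kco := hring.symm
          have hsum : ∑ K : G'.ConnectedComponent, ((XK K).card:ℝ) ≤ N * Kco := by
            calc ∑ K : G'.ConnectedComponent, ((XK K).card:ℝ)
                ≤ ∑ K : G'.ConnectedComponent, (Fintype.card ↥K.supp : ℝ) * Kco :=
                  Finset.sum_le_sum (fun K _ => hper K)
              _ = (∑ K : G'.ConnectedComponent, (Fintype.card ↥K.supp : ℝ)) * Kco :=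
                  (Finset.sum_mul _ _ _).symm
              _ ≤ N * Kco := mul_le_mul_of_nonneg_right hsupp_sum hKco0
          have hdiv : (N/2)^(-ε) = N^(-ε) * 2^ε := by
            rw [Real.div_rpow hN0.le (by norm_num : (0:ℝ) ≤ 2),
              Real.rpow_neg (by norm_num : (0:ℝ) ≤ 2)]
            rw [div_eq_mul_inv, inv_inv]
          have hNK : N * Kco = C * N * s^(-ε) - ((C-c) * 2^ε) * N^(1-ε) := by
            rw [hKco, hdiv, hNsplit]; ring
          rw [hkey] at hNK
          have h7 : c * N^(1-ε) + (C - c) * N^(1-ε) = C * N^(1-ε) := by ring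
          linarith

lemma one_le_c (𝒢 : ∀ V : Type, SimpleGraph V → Prop) (hher : Hereditary 𝒢)
    (c ε : ℝ) (hε0 : 0 < ε) (hε1 : ε < 1) (hsep : SepBound 𝒢 c ε)
    (V : Type) [Fintype V] (G : SimpleGraph V) (hG : 𝒢 V G) (hne : Nonempty V) :
    1 ≤ c := by
  classical
  obtain ⟨v⟩ := hne
  have h1 : 𝒢 ↥({v} : Set V) (G.induce {v}) := hher V G hG {v}
  obtain ⟨S, hScard, hScomp⟩ := hsep _ (G.induce {v}) h1
  have hcard : Fintype.card ↥({v} : Set V) = 1 := by simp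
  by_cases hS : S = ∅
  · exfalso
    subst hS
    have hmem : (⟨v, rfl⟩ : ↥({v} : Set V)) ∈ ((↑(∅ : Finset ↥({v}:Set V)) : Set ↥({v}:Set V))ᶜ) := by
      simp
    set v0 : ↥((↑(∅ : Finset ↥({v}:Set V)) : Set ↥({v}:Set V))ᶜ) := ⟨⟨v, rfl⟩, hmem⟩
    have h2 := hScomp (((G.induce {v}).induce _).connectedComponentMk v0)
    rw [hcard] at h2
    have h3 : 0 < Nat.card (((G.induce {v}).induce _).connectedComponentMk v0).supp := by
      have : Nonempty (((G.induce {v}).induce _).connectedComponentMk v0).supp :=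
        ⟨⟨v0, rfl⟩⟩
      exact Nat.card_pos
    have h4 : (1:ℝ) ≤ (Nat.card (((G.induce {v}).induce _).connectedComponentMk v0).supp : ℝ) := by
      exact_mod_cast h3
    simp only [Nat.cast_one] at h2
    linarith
  · have h4 : 1 ≤ S.card := Finset.card_pos.mpr (Finset.nonempty_iff_ne_empty.mpr hS)
    rw [hcard] at hScard
    have h5 : ((1:ℕ):ℝ) ≤ (S.card:ℝ) := by exact_mod_cast h4
    have := le_trans h5 hScard
    simpa [Real.one_rpow] using this

set_option maxHeartbeats 1600000 in
lemma good (𝒢 : ∀ V : Type, SimpleGraph V → Prop) (hher : Hereditary 𝒢)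
    (c ε : ℝ) (hc : 0 < c) (hε0 : 0 < ε) (hε1 : ε < 1) (hsep : SepBound 𝒢 c ε) :
    ∀ d : ℕ, 1 ≤ d → ∀ (V : Type) [Fintype V] (G : SimpleGraph V), 𝒢 V G →
      ∃ (W : Type) (H : SimpleGraph W) (P : V → W), tdLE H d ∧
        (∀ u v, G.Adj u v → P u = P v ∨ H.Adj (P u) (P v)) ∧
        ∀ w : W, (Nat.card (P ⁻¹' {w}) : ℝ) ≤
          c * 2^ε/(2^ε-1) * (Fintype.card V : ℝ) ^ ((1-ε)/(1-ε^d)) := by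
  classical
  have h2e : (1:ℝ) < 2^ε := by
    rw [show (1:ℝ) = (2:ℝ)^(0:ℝ) by simp]
    exact Real.rpow_lt_rpow_of_exponent_lt one_lt_two hε0
  have hCc : c ≤ c * 2^ε/(2^ε - 1) := by
    rw [le_div_iff₀ (by linarith)]
    nlinarith
  set C : ℝ := c * 2^ε/(2^ε-1) with hCdef
  have hC0 : 0 < C := lt_of_lt_of_le hc hCc
  intro d hd
  induction d, hd using Nat.le_induction with
  | base =>
    intro V _ G hG
    refine ⟨PUnit, ⊥, fun _ => PUnit.unit, ?_, ?_, ?_⟩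
    · refine ⟨fun _ _ => False, fun _ _ _ h _ => h.elim,
        fun _ _ _ h _ => h.elim, fun u v h => ?_, fun _ => (0 : Fin 1), fun _ _ h => h.elim⟩
      simp at h
    · exact fun _ _ _ => Or.inl rfl
    · intro w
      have hexp : (1-ε)/(1-ε^1) = 1 := by
        rw [pow_one]
        exact div_self (by linarith)
      rw [hexp, Real.rpow_one]
      have huniv : Nat.card (Set.univ : Set V) = Nat.card V :=
        Nat.card_congr (Equiv.Set.univ V)
      have h1 : Nat.card ((fun _ => PUnit.unit) ⁻¹' {w} : Set V) ≤ Nat.card V :=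
        (card_le_aux _ Set.univ id (fun a _ => ⟨a, trivial, rfl⟩)).trans huniv.le
      rw [Nat.card_eq_fintype_card (α := V)] at h1
      by_cases hN : Fintype.card V = 0
      · have hz : Nat.card ((fun _ => PUnit.unit) ⁻¹' {w} : Set V) = 0 := by omega
        rw [hz, hN]
        simp
      · have hne : Nonempty V := Fintype.card_pos_iff.mp (by omega)
        have h1c := one_le_c 𝒢 hher c ε hε0 hε1 hsep V G hG hne
        have hC1 : 1 ≤ C := le_trans h1c hCc
        have h2 : (Nat.card ((fun _ => PUnit.unit) ⁻¹' {w} : Set V) : ℝ)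
            ≤ (Fintype.card V : ℝ) := by exact_mod_cast h1
        have h3 : (Fintype.card V : ℝ) ≤ C * (Fintype.card V : ℝ) :=
          le_mul_of_one_le_left (by positivity) hC1
        linarith
  | succ d hd1 IH =>
    intro V _ G hG
    by_cases hN : Fintype.card V = 0
    · refine ⟨PUnit, ⊥, fun _ => PUnit.unit, ?_, ?_, ?_⟩
      · refine ⟨fun _ _ => False, fun _ _ _ h _ => h.elim,
          fun _ _ _ h _ => h.elim, fun u v h => ?_,
          fun _ => (⟨0, by omega⟩ : Fin (d+1)), fun _ _ h => h.elim⟩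
        simp at h
      · exact fun _ _ _ => Or.inl rfl
      · intro w
        have huniv : Nat.card (Set.univ : Set V) = Nat.card V :=
          Nat.card_congr (Equiv.Set.univ V)
        have h1 : Nat.card ((fun _ => PUnit.unit) ⁻¹' {w} : Set V) ≤ Nat.card V :=
          (card_le_aux _ Set.univ id (fun a _ => ⟨a, trivial, rfl⟩)).trans huniv.le
        rw [Nat.card_eq_fintype_card (α := V), hN] at h1
        have h2 : Nat.card ((fun _ => PUnit.unit) ⁻¹' {w} : Set V) = 0 := by omega
        rw [h2, hN]
        have hεd1 : ε^(d+1) < 1 := pow_lt_one₀ hε0.le hε1 (by omega)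
        have hexp0 : (1-ε)/(1-ε^(d+1)) ≠ 0 :=
          div_ne_zero (by linarith) (by linarith)
        rw [Nat.cast_zero, Real.zero_rpow hexp0]
        simp
    · -- main case
      have hN1 : 1 ≤ Fintype.card V := by omega
      have hεd : ε^d < 1 := pow_lt_one₀ hε0.le hε1 (by omega)
      have hεd1 : ε^(d+1) < 1 := pow_lt_one₀ hε0.le hε1 (by omega)
      have hεdpos : 0 < ε^d := pow_pos hε0 d
      set σ : ℝ := (1-ε^d)/(1-ε^(d+1)) with hσdef
      have hσ0 : 0 < σ := div_pos (by linarith) (by linarith)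
      set N : ℝ := (Fintype.card V : ℝ) with hNdef
      have hN1' : (1:ℝ) ≤ N := by rw [hNdef]; exact_mod_cast hN1
      have hN0 : (0:ℝ) < N := lt_of_lt_of_le one_pos hN1'
      set s : ℝ := N^σ with hsdef
      have hs1 : (1:ℝ) ≤ s := Real.one_le_rpow hN1' hσ0.le
      obtain ⟨X, hXcomp, hXcard⟩ :=
        halve 𝒢 hher c ε hc hε0 hε1 hsep s hs1 (Fintype.card V) V G hG le_rfl
      have hden1 : (1:ℝ)-ε^d ≠ 0 := by linarith
      have hden2 : (1:ℝ)-ε^(d+1) ≠ 0 := by linarith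
      have hden2' : (1:ℝ)-ε*ε^d ≠ 0 := by rw [← pow_succ']; exact hden2
      have hexp1 : 1 - σ*ε = (1-ε)/(1-ε^(d+1)) := by
        rw [hσdef, eq_div_iff hden2]
        field_simp
        ring
      have hb1 : N * s^(-ε) = N^((1-ε)/(1-ε^(d+1))) := by
        rw [hsdef, ← Real.rpow_mul hN0.le, ← hexp1,
          show (1:ℝ) - σ*ε = 1 + σ*(-ε) by ring, Real.rpow_add hN0, Real.rpow_one]
      have hnonneg : (0:ℝ) ≤ (C - c)*N^(1-ε) :=
        mul_nonneg (by linarith) (Real.rpow_nonneg hN0.le _)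
      rw [← hNdef] at hXcard
      have hX2 : (X.card:ℝ) ≤ C*N*s^(-ε) := by
        by_cases h : N ≤ s
        · rw [if_pos h] at hXcard
          have hp : (0:ℝ) ≤ C*N*s^(-ε) := by positivity
          linarith
        · rw [if_neg h] at hXcard
          linarith
      have hXbound : (X.card:ℝ) ≤ C * N^((1-ε)/(1-ε^(d+1))) := by
        calc (X.card:ℝ) ≤ C*N*s^(-ε) := hX2
          _ = C * (N * s^(-ε)) := by ring
          _ = C * N^((1-ε)/(1-ε^(d+1))) := by rw [hb1]
      -- components
      set G' := G.induce (↑X : Set V)ᶜ with hG'def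
      have hG'mem : 𝒢 _ G' := hher V G hG _
      have hGK : ∀ K : G'.ConnectedComponent, 𝒢 _ (G'.induce K.supp) :=
        fun K => hher _ _ hG'mem K.supp
      choose Wf Hf Pf htdf hedgef hfibf using fun K : G'.ConnectedComponent =>
        IH ↥K.supp (G'.induce K.supp) (hGK K)
      choose ltf hltrans hltot hltedge hltf using fun K : G'.ConnectedComponent => htdf K
      choose ff hff using hltf
      -- the new graph
      refine ⟨Option ((K : G'.ConnectedComponent) × Wf K),
        { Adj := fun a b =>
            (a = none ∧ b ≠ none) ∨ (b = none ∧ a ≠ none) ∨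
            (∃ (K : G'.ConnectedComponent) (w w' : Wf K),
              a = some ⟨K, w⟩ ∧ b = some ⟨K, w'⟩ ∧ (Hf K).Adj w w'),
          symm := by
            constructor
            rintro a b (⟨h1,h2⟩|⟨h1,h2⟩|⟨K,w,w',h1,h2,h3⟩)
            · exact Or.inr (Or.inl ⟨h1,h2⟩)
            · exact Or.inl ⟨h1,h2⟩
            · exact Or.inr (Or.inr ⟨K,w',w,h2,h1,h3.symm⟩)
          loopless := by
            constructor
            rintro a (⟨h1,h2⟩|⟨h1,h2⟩|⟨K,w,w',h1,h2,h3⟩)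
            · exact h2 h1
            · exact h2 h1
            · rw [h1] at h2
              have hww : w = w' := by
                have h4 := Option.some_injective _ h2
                exact eq_of_heq (Sigma.mk.inj_iff.mp h4).2
              rw [hww] at h3
              exact (Hf K).loopless.irrefl _ h3 },
        fun v => if h : v ∈ (↑X : Set V) then none
          else some ⟨G'.connectedComponentMk ⟨v, h⟩,
            Pf (G'.connectedComponentMk ⟨v, h⟩) ⟨⟨v, h⟩, rfl⟩⟩,
        ?_, ?_, ?_⟩
      · -- tree-depth
        refine ⟨fun a b =>
            (a = none ∧ b ≠ none) ∨
            (∃ (K : G'.ConnectedComponent) (w w' : Wf K),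
              a = some ⟨K, w⟩ ∧ b = some ⟨K, w'⟩ ∧ ltf K w w'), ?_, ?_, ?_, ?_⟩
        · -- transitive
          rintro a b e (⟨h1,h2⟩|⟨K,w,w',h1,h2,h3⟩) (⟨g1,g2⟩|⟨K',x,x',g1,g2,g3⟩)
          · exact absurd g1 h2
          · refine Or.inl ⟨h1, ?_⟩
            rw [g2]; simp
          · rw [g1] at h2
            cases h2
          · have he := Option.some_injective _ (h2.symm.trans g1)
            obtain ⟨hK, hx⟩ := Sigma.mk.inj_iff.mp he
            subst hK
            have hx' : w' = x := eq_of_heq hx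
            exact Or.inr ⟨K, w, x', h1, g2, hltrans K h3 (hx' ▸ g3)⟩
        · -- downward total
          rintro u v e (⟨h1,h2⟩|⟨K,w1,w1',h1,h2,h3⟩) (⟨g1,g2⟩|⟨K',w2,w2',g1,g2,g3⟩)
          · exact Or.inr (Or.inr (h1.trans g1.symm))
          · refine Or.inl (Or.inl ⟨h1, ?_⟩)
            rw [g1]; simp
          · refine Or.inr (Or.inl (Or.inl ⟨g1, ?_⟩))
            rw [h1]; simp
          · have he := Option.some_injective _ (h2.symm.trans g2)
            obtain ⟨hK, hx⟩ := Sigma.mk.inj_iff.mp he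
            subst hK
            have hx' : w1' = w2' := eq_of_heq hx
            rcases hltot K w1 w2 w1' h3 (hx' ▸ g3) with ht | ht | ht
            · exact Or.inl (Or.inr ⟨K, w1, w2, h1, g1, ht⟩)
            · exact Or.inr (Or.inl (Or.inr ⟨K, w2, w1, g1, h1, ht⟩))
            · refine Or.inr (Or.inr ?_)
              rw [h1, g1, ht]
        · -- edges comparable
          rintro a b (⟨h1,h2⟩|⟨h1,h2⟩|⟨K,w,w',h1,h2,h3⟩)
          · exact Or.inl (Or.inl ⟨h1, h2⟩)
          · exact Or.inr (Or.inl ⟨h1, h2⟩)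
          · rcases hltedge K h3 with ht | ht
            · exact Or.inl (Or.inr ⟨K, w, w', h1, h2, ht⟩)
            · exact Or.inr (Or.inr ⟨K, w', w, h2, h1, ht⟩)
        · -- rank function
          refine ⟨fun a => match a with
            | none => ⟨0, Nat.succ_pos d⟩
            | some p => (ff p.1 p.2).succ, ?_⟩
          rintro a b (⟨h1,h2⟩|⟨K,w,w',h1,h2,h3⟩)
          · subst h1
            rcases b with _ | p
            · exact absurd rfl h2
            · exact Fin.succ_pos _
          · subst h1; subst h2
            exact Fin.succ_lt_succ_iff.mpr (hff K w w' h3)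
      · -- edge condition
        have sig_eq : ∀ (K1 K2 : G'.ConnectedComponent) (h : K1 = K2)
            (x : ↥K1.supp) (y : ↥K2.supp), (x.1 : ↥((↑X:Set V)ᶜ)) = y.1 →
            (⟨K1, Pf K1 x⟩ : (K : G'.ConnectedComponent) × Wf K) = ⟨K2, Pf K2 y⟩ := by
          intro K1 K2 h
          subst h
          intro x y hxy
          have hxy' : x = y := Subtype.ext hxy
          rw [hxy']
        intro u v huv
        by_cases hu : u ∈ (↑X : Set V) <;> by_cases hv : v ∈ (↑X : Set V)
        · left; simp only [dif_pos hu, dif_pos hv]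
        · right
          refine Or.inl ⟨by simp only [dif_pos hu], ?_⟩
          simp only [dif_neg hv]; simp
        · right
          refine Or.inr (Or.inl ⟨by simp only [dif_pos hv], ?_⟩)
          simp only [dif_neg hu]; simp
        · have hadj' : G'.Adj ⟨u, hu⟩ ⟨v, hv⟩ := huv
          have hKeq : G'.connectedComponentMk ⟨u, hu⟩ = G'.connectedComponentMk ⟨v, hv⟩ :=
            ConnectedComponent.sound hadj'.reachable
          have hy : (⟨v, hv⟩ : ↥((↑X:Set V)ᶜ)) ∈ (G'.connectedComponentMk ⟨u, hu⟩).supp :=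
            hKeq.symm
          have hPu : (if h : u ∈ (↑X : Set V) then (none : Option ((K : G'.ConnectedComponent) × Wf K))
              else some ⟨G'.connectedComponentMk ⟨u, h⟩,
                Pf (G'.connectedComponentMk ⟨u, h⟩) ⟨⟨u, h⟩, rfl⟩⟩)
              = some ⟨G'.connectedComponentMk ⟨u, hu⟩,
                Pf (G'.connectedComponentMk ⟨u, hu⟩) ⟨⟨u, hu⟩, rfl⟩⟩ := by
            simp only [dif_neg hu]
          have hPv : (if h : v ∈ (↑X : Set V) then (none : Option ((K : G'.ConnectedComponent) × Wf K))
              else some ⟨G'.connectedComponentMk ⟨v, h⟩,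
                Pf (G'.connectedComponentMk ⟨v, h⟩) ⟨⟨v, h⟩, rfl⟩⟩)
              = some ⟨G'.connectedComponentMk ⟨u, hu⟩,
                Pf (G'.connectedComponentMk ⟨u, hu⟩) ⟨⟨v, hv⟩, hy⟩⟩ := by
            simp only [dif_neg hv]
            exact congrArg some (sig_eq _ _ hKeq.symm _ ⟨⟨v, hv⟩, hy⟩ rfl)
          have hadjK : (G'.induce (G'.connectedComponentMk ⟨u, hu⟩).supp).Adj
              ⟨⟨u, hu⟩, rfl⟩ ⟨⟨v, hv⟩, hy⟩ := hadj'
          rcases hedgef (G'.connectedComponentMk ⟨u, hu⟩) ⟨⟨u, hu⟩, rfl⟩ ⟨⟨v, hv⟩, hy⟩ hadjK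
            with heq | hA
          · left
            show _ = _
            beta_reduce
            rw [hPu, hPv, heq]
          · right
            show (((fun v => if h : v ∈ (↑X : Set V) then
                (none : Option ((K : G'.ConnectedComponent) × Wf K))
                else some ⟨G'.connectedComponentMk ⟨v, h⟩,
                  Pf (G'.connectedComponentMk ⟨v, h⟩) ⟨⟨v, h⟩, rfl⟩⟩) u = none ∧ _) ∨ _)
            beta_reduce
            rw [hPu, hPv]
            exact Or.inr (Or.inr ⟨_, _, _, rfl, rfl, hA⟩)
      · -- fibers
        intro w
        rcases w with _ | ⟨K, w⟩
        · have hfib_eq : (fun v => if h : v ∈ (↑X : Set V) then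
              (none : Option ((K : G'.ConnectedComponent) × Wf K))
              else some ⟨G'.connectedComponentMk ⟨v, h⟩,
                Pf (G'.connectedComponentMk ⟨v, h⟩) ⟨⟨v, h⟩, rfl⟩⟩) ⁻¹' {none}
              = (↑X : Set V) := by
            ext z
            simp only [Set.mem_preimage, Set.mem_singleton_iff]
            by_cases hz : z ∈ (↑X:Set V)
            · simp [dif_pos hz, hz]
            · simp [dif_neg hz, hz]
          rw [hfib_eq, Nat.card_coe_set_eq, Set.ncard_coe_finset]
          exact hXbound
        · have hinj : Nat.card ((fun v => if h : v ∈ (↑X : Set V) then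
              (none : Option ((K : G'.ConnectedComponent) × Wf K))
              else some ⟨G'.connectedComponentMk ⟨v, h⟩,
                Pf (G'.connectedComponentMk ⟨v, h⟩) ⟨⟨v, h⟩, rfl⟩⟩) ⁻¹' {some ⟨K, w⟩})
              ≤ Nat.card (Pf K ⁻¹' {w}) := by
            apply card_le_aux _ _ (fun z : ↥K.supp => (z.1.1 : V))
            intro a ha
            simp only [Set.mem_preimage, Set.mem_singleton_iff] at ha
            by_cases haX : a ∈ (↑X:Set V)
            · rw [dif_pos haX] at ha
              exact absurd ha (by simp)
            · rw [dif_neg haX] at ha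
              have hsig := Option.some_injective _ ha
              obtain ⟨hK1, hw1⟩ := Sigma.mk.inj_iff.mp hsig
              subst hK1
              exact ⟨⟨⟨a, haX⟩, rfl⟩, eq_of_heq hw1, rfl⟩
          have h1 := hfibf K w
          have hKs : (Fintype.card ↥K.supp : ℝ) ≤ s := by
            have h5 := hXcomp K
            rwa [Nat.card_eq_fintype_card] at h5
          have hδd0 : (0:ℝ) ≤ (1-ε)/(1-ε^d) :=
            le_of_lt (div_pos (by linarith) (by linarith))
          have h2 : ((Fintype.card ↥K.supp : ℝ))^((1-ε)/(1-ε^d)) ≤ s^((1-ε)/(1-ε^d)) :=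
            Real.rpow_le_rpow (by positivity) hKs hδd0
          have h3 : s^((1-ε)/(1-ε^d)) = N^((1-ε)/(1-ε^(d+1))) := by
            rw [hsdef, ← Real.rpow_mul hN0.le]
            congr 1
            rw [hσdef]
            field_simp
          calc (Nat.card ((fun v => if h : v ∈ (↑X : Set V) then
                (none : Option ((K : G'.ConnectedComponent) × Wf K))
                else some ⟨G'.connectedComponentMk ⟨v, h⟩,
                  Pf (G'.connectedComponentMk ⟨v, h⟩) ⟨⟨v, h⟩, rfl⟩⟩) ⁻¹' {some ⟨K, w⟩}) : ℝ)
              ≤ (Nat.card (Pf K ⁻¹' {w}) : ℝ) := by exact_mod_cast hinj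
            _ ≤ C * ((Fintype.card ↥K.supp : ℝ))^((1-ε)/(1-ε^d)) := h1
            _ ≤ C * s^((1-ε)/(1-ε^d)) := mul_le_mul_of_nonneg_left h2 hC0.le
            _ = C * N^((1-ε)/(1-ε^(d+1))) := by rw [h3]


theorem sublinear_separator_treedepth_product
    (𝒢 : ∀ V : Type, SimpleGraph V → Prop) (hher : Hereditary 𝒢)
    (c ε : ℝ) (hc : 0 < c) (hε0 : 0 < ε) (hε1 : ε < 1)
    (hsep : SepBound 𝒢 c ε) (d : ℕ) (hd : 0 < d)
    (V : Type) [Fintype V] (G : SimpleGraph V) (hG : 𝒢 V G) :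
    ∃ (W : Type) (H : SimpleGraph W) (m : ℕ),
      tdLE H d ∧
      (m : ℝ) ≤ c * 2 ^ ε / (2 ^ ε - 1) *
        (Fintype.card V : ℝ) ^ ((1 - ε) / (1 - ε ^ d)) ∧
      ContainedIn G (StrongProd H (⊤ : SimpleGraph (Fin m))) := by
  classical
  obtain ⟨W, H, P, htd, hedge, hfib⟩ := good 𝒢 hher c ε hc hε0 hε1 hsep d hd V G hG
  have h2e : (1:ℝ) < 2^ε := by
    rw [show (1:ℝ) = (2:ℝ)^(0:ℝ) by simp]
    exact Real.rpow_lt_rpow_of_exponent_lt one_lt_two hε0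
  set q : ℝ := c * 2 ^ ε / (2 ^ ε - 1) * (Fintype.card V : ℝ) ^ ((1 - ε) / (1 - ε ^ d))
    with hqdef
  have hq0 : 0 ≤ q := by
    rw [hqdef]
    apply mul_nonneg
    · apply div_nonneg
      · positivity
      · linarith
    · exact Real.rpow_nonneg (by positivity) _
  refine ⟨W, H, ⌊q⌋₊, htd, Nat.floor_le hq0, ?_⟩
  have hm : ∀ w : W, Nat.card (P ⁻¹' {w}) ≤ ⌊q⌋₊ := fun w => Nat.le_floor (hfib w)
  have hg : ∀ w : W, ∃ g : ↥(P ⁻¹' {w}) → Fin ⌊q⌋₊, Function.Injective g := by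
    intro w
    haveI : Fintype ↥(P ⁻¹' {w}) := Fintype.ofFinite _
    have hcard : Fintype.card ↥(P ⁻¹' {w}) ≤ Fintype.card (Fin ⌊q⌋₊) := by
      rw [Fintype.card_fin, ← Nat.card_eq_fintype_card]
      exact hm w
    obtain ⟨e⟩ := Function.Embedding.nonempty_iff_card_le.mpr hcard
    exact ⟨e, e.injective⟩
  choose g hginj using hg
  have key : ∀ (w1 w2 : W) (_ : w1 = w2) (x : ↥(P ⁻¹' {w1})) (y : ↥(P ⁻¹' {w2})),
      g w1 x = g w2 y → (x.1 : V) = y.1 := by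
    intro w1 w2 h
    subst h
    intro x y hxy
    rw [hginj w1 hxy]
  have hinj : Function.Injective (fun v : V => ((P v, g (P v) ⟨v, rfl⟩) : W × Fin ⌊q⌋₊)) := by
    intro u v huv
    have h1 : P u = P v := congrArg Prod.fst huv
    have h2 : g (P u) ⟨u, rfl⟩ = g (P v) ⟨v, rfl⟩ := congrArg Prod.snd huv
    exact key (P u) (P v) h1 ⟨u, rfl⟩ ⟨v, rfl⟩ h2
  refine ⟨fun v => (P v, g (P v) ⟨v, rfl⟩), hinj, ?_⟩
  intro u v huv
  refine ⟨fun heq => G.ne_of_adj huv (hinj heq), ?_, ?_⟩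
  · rcases hedge u v huv with h | h
    · exact Or.inl h
    · exact Or.inr h
  · rcases eq_or_ne (g (P u) ⟨u, rfl⟩) (g (P v) ⟨v, rfl⟩) with h | h
    · exact Or.inl h
    · exact Or.inr ((SimpleGraph.top_adj _ _).mpr h)
end

section
/- For every path P and positive integers c, n, the graph G = P ⊠ K_c is (n, √(cn))-separable: for every assignment of non-negative real weights to V(G) with total weight n, there is a vertex set S of total weight at most √(cn) such that each connected component of G − S has at most √(cn) vertices. -/
open SimpleGraph

private lemma modShift {m r : ℕ} (hr : r < m) (i : ℕ) :
    i % m = r ↔ (i + (m - 1 - r)) % m = m - 1 := by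
  have hm : 0 < m := lt_of_le_of_lt (Nat.zero_le r) hr
  obtain ⟨q, s, hs, rfl⟩ : ∃ q s, s < m ∧ i = m * q + s :=
    ⟨i / m, i % m, Nat.mod_lt _ hm, by rw [Nat.div_add_mod]⟩
  have h1 : (m * q + s) % m = s := by rw [Nat.mul_add_mod, Nat.mod_eq_of_lt hs]
  have h2 : (m * q + s + (m - 1 - r)) % m = (s + (m - 1 - r)) % m := by
    rw [Nat.add_assoc, Nat.mul_add_mod]
  rw [h1, h2]
  rcases Nat.lt_or_ge (s + (m - 1 - r)) m with h | h
  · rw [Nat.mod_eq_of_lt h]; omega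
  · have h3 : (s + (m - 1 - r)) % m = s + (m - 1 - r) - m := by
      rw [Nat.mod_eq_sub_mod h, Nat.mod_eq_of_lt (by omega)]
    rw [h3]; omega

private lemma succDiv {m a : ℕ} (h : a % m + 1 < m) : (a + 1) / m = a / m := by
  have hdm := Nat.div_add_mod a m
  have lo : (a / m) * m ≤ a + 1 := by
    rw [Nat.mul_comm]; linarith [Nat.zero_le (a % m)]
  have hi : a + 1 < (a / m + 1) * m := by
    rw [Nat.add_mul, Nat.one_mul, Nat.mul_comm]; linarith
  exact Nat.div_eq_of_lt_le lo hi

private lemma reach_const {V : Type*} {G : SimpleGraph V} {f : V → ℕ}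
    (hf : ∀ ⦃a b⦄, G.Adj a b → f a = f b) {a b : V} (h : G.Reachable a b) :
    f a = f b := by
  obtain ⟨p⟩ := h
  induction p with
  | nil => rfl
  | cons h _ ih => exact (hf h).trans ih

theorem pathProdComplete_separable (t c n : ℕ) (hc : 0 < c) (hn : 0 < n)
    (w : Fin t × Fin c → ℝ) (hw0 : ∀ v, 0 ≤ w v) (hwsum : ∑ v, w v = n) :
    ∃ S : Finset (Fin t × Fin c),
      (∑ v ∈ S, w v) ≤ Real.sqrt (c * n) ∧
      CompsLER (StrongProd (SimpleGraph.pathGraph t) (⊤ : SimpleGraph (Fin c)))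
        (↑S) (Real.sqrt (c * n)) := by
  classical
  set g : ℕ := ⌊Real.sqrt ((n : ℝ) / c)⌋₊ with hgdef
  set m : ℕ := g + 1 with hmdef
  have hm : 0 < m := Nat.succ_pos g
  have hcR : (0:ℝ) < c := by exact_mod_cast hc
  have hnR : (0:ℝ) < n := by exact_mod_cast hn
  have ha : (0:ℝ) < Real.sqrt c := Real.sqrt_pos.mpr hcR
  have hb : (0:ℝ) < Real.sqrt n := Real.sqrt_pos.mpr hnR
  have ha2 : Real.sqrt c * Real.sqrt c = c := Real.mul_self_sqrt hcR.le
  have hb2 : Real.sqrt n * Real.sqrt n = n := Real.mul_self_sqrt hnR.le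
  have hsab : Real.sqrt ((c:ℝ) * n) = Real.sqrt c * Real.sqrt n :=
    Real.sqrt_mul hcR.le _
  have hdiv : Real.sqrt ((n:ℝ)/c) = Real.sqrt n / Real.sqrt c := Real.sqrt_div hnR.le _
  have hub : Real.sqrt n / Real.sqrt c < (m : ℝ) := by
    rw [← hdiv, hmdef]; push_cast; exact Nat.lt_floor_add_one _
  have hlb : (g : ℝ) ≤ Real.sqrt n / Real.sqrt c := by
    rw [← hdiv]; exact Nat.floor_le (Real.sqrt_nonneg _)
  have hub' : Real.sqrt n < (m : ℝ) * Real.sqrt c := by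
    rw [div_lt_iff₀ ha] at hub; linarith
  have hlb' : (g : ℝ) * Real.sqrt c ≤ Real.sqrt n := by
    rw [le_div_iff₀ ha] at hlb; linarith
  have key1 : (n : ℝ) / m ≤ Real.sqrt ((c:ℝ) * n) := by
    rw [div_le_iff₀ (by positivity), hsab]
    nlinarith [mul_le_mul_of_nonneg_right hub'.le hb.le]
  have key2 : ((g * c : ℕ) : ℝ) ≤ Real.sqrt ((c:ℝ) * n) := by
    push_cast
    rw [hsab]
    nlinarith [mul_le_mul_of_nonneg_right hlb' ha.le]
  -- pigeonhole
  have hfiber : ∑ x ∈ Finset.range m,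
      ∑ v ∈ Finset.univ.filter (fun v : Fin t × Fin c => v.1.val % m = x), w v = (n : ℝ) := by
    rw [← hwsum]
    exact Finset.sum_fiberwise_of_maps_to (fun v _ => Finset.mem_range.mpr (Nat.mod_lt _ hm)) w
  obtain ⟨r, hrm, hWr⟩ : ∃ r, r < m ∧
      ∑ v ∈ Finset.univ.filter (fun v : Fin t × Fin c => v.1.val % m = r), w v ≤ (n : ℝ) / m := by
    by_contra hcon
    push_neg at hcon
    have hlt : ∑ x ∈ Finset.range m, (n:ℝ)/m
        < ∑ x ∈ Finset.range m,
          ∑ v ∈ Finset.univ.filter (fun v : Fin t × Fin c => v.1.val % m = x), w v :=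
      Finset.sum_lt_sum_of_nonempty (Finset.nonempty_range_iff.mpr hm.ne')
        (fun x hx => hcon x (Finset.mem_range.mp hx))
    rw [hfiber, Finset.sum_const, Finset.card_range, nsmul_eq_mul,
      mul_div_cancel₀ _ (by positivity : (m:ℝ) ≠ 0)] at hlt
    exact lt_irrefl _ hlt
  set S : Finset (Fin t × Fin c) := Finset.univ.filter (fun v => v.1.val % m = r) with hSdef
  refine ⟨S, le_trans hWr key1, ?_⟩
  set G := StrongProd (SimpleGraph.pathGraph t) (⊤ : SimpleGraph (Fin c)) with hGdef
  intro cc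
  set φ : ℕ → ℕ := fun i => (i + (m - 1 - r)) / m with hφdef
  have memc : ∀ v : Fin t × Fin c, v ∈ ((S : Set (Fin t × Fin c))ᶜ) ↔ v.1.val % m ≠ r := by
    intro v; simp [hSdef]
  -- adjacency preserves φ of the column
  have hstep : ∀ {i : ℕ}, i % m ≠ r → φ (i + 1) = φ i := by
    intro i hi
    have h1 : (i + (m - 1 - r)) % m ≠ m - 1 := fun h => hi ((modShift hrm i).mpr h)
    have h2 : (i + (m - 1 - r)) % m < m := Nat.mod_lt _ hm
    have h3 : (i + (m - 1 - r)) % m + 1 < m := by omega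
    show (i + 1 + (m - 1 - r)) / m = (i + (m - 1 - r)) / m
    rw [show i + 1 + (m - 1 - r) = (i + (m - 1 - r)) + 1 by omega]
    exact succDiv h3
  have hadj : ∀ ⦃a b : ((S : Set (Fin t × Fin c))ᶜ : Set (Fin t × Fin c))⦄,
      (G.induce (S : Set (Fin t × Fin c))ᶜ).Adj a b → φ a.val.1.val = φ b.val.1.val := by
    intro a b hab
    have hab' : G.Adj a.val b.val := hab
    have ha' : a.val.1.val % m ≠ r := (memc a.val).mp a.property
    have hb' : b.val.1.val % m ≠ r := (memc b.val).mp b.property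
    rcases hab'.2.1 with h | h
    · rw [h]
    · rcases (SimpleGraph.pathGraph_adj).mp h with h | h
      · rw [← h]; exact (hstep ha').symm
      · rw [← h]; exact hstep hb'
  obtain ⟨v₀, hv₀⟩ := cc.exists_rep
  set K : ℕ := φ v₀.val.1.val with hKdef
  have hK : ∀ x : ((S : Set (Fin t × Fin c))ᶜ : Set (Fin t × Fin c)),
      x ∈ cc.supp → φ x.val.1.val = K := by
    intro x hx
    have hmk : (G.induce (S : Set (Fin t × Fin c))ᶜ).connectedComponentMk x
        = (G.induce (S : Set (Fin t × Fin c))ᶜ).connectedComponentMk v₀ :=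
      ((cc.mem_supp_iff x).mp hx).trans hv₀.symm
    exact reach_const hadj (SimpleGraph.ConnectedComponent.exact hmk)
  -- injection into Fin g × Fin c
  have hcard : Nat.card cc.supp ≤ g * c := by
    have hcardF : Nat.card (Fin g × Fin c) = g * c := by simp
    rw [← hcardF]
    have hFin : ∀ x : cc.supp, (x.val.val.1.val + (m - 1 - r)) % m < g := by
      intro x
      have h1 : (x.val.val.1.val + (m - 1 - r)) % m ≠ m - 1 :=
        fun h => (memc x.val.val).mp x.val.property ((modShift hrm _).mpr h)
      have h2 : (x.val.val.1.val + (m - 1 - r)) % m < m := Nat.mod_lt _ hm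
      omega
    refine Nat.card_le_card_of_injective
      (fun x : cc.supp => ((⟨(x.val.val.1.val + (m - 1 - r)) % m, hFin x⟩ : Fin g),
        x.val.val.2)) ?_
    intro x y hxy
    simp only [Prod.mk.injEq, Fin.mk.injEq] at hxy
    obtain ⟨h1, h2⟩ := hxy
    have hx := hK x.val x.property
    have hy := hK y.val y.property
    have hdx := Nat.div_add_mod (x.val.val.1.val + (m - 1 - r)) m
    have hdy := Nat.div_add_mod (y.val.val.1.val + (m - 1 - r)) m
    have hcols : x.val.val.1.val = y.val.val.1.val := by
      have : (x.val.val.1.val + (m - 1 - r)) = (y.val.val.1.val + (m - 1 - r)) := by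
        rw [← hdx, ← hdy]
        show m * (φ x.val.val.1.val) + _ = m * (φ y.val.val.1.val) + _
        rw [hx, hy, h1]
      omega
    apply Subtype.ext; apply Subtype.ext
    exact Prod.ext (Fin.ext hcols) h2
  calc (Nat.card cc.supp : ℝ) ≤ ((g * c : ℕ) : ℝ) := by exact_mod_cast hcard
    _ ≤ Real.sqrt ((c:ℝ) * n) := key2
end

section
/- Let S be a set of p vertices in the k-th power P_n^k of the n-vertex path such that every connected component of P_n^k − S has at most q vertices. Then k·n ≤ p·q + k·(p + q). -/
open SimpleGraph

-- same component lemma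
lemma pp_same_comp (n k : ℕ) (S : Finset (Fin n))
    (u v : ((↑S : Set (Fin n))ᶜ : Set (Fin n)))
    (h1 : (u.1.val : ℤ) - v.1.val ≤ k) (h2 : (v.1.val : ℤ) - u.1.val ≤ k) :
    ((pathPow n k).induce (↑S : Set (Fin n))ᶜ).connectedComponentMk u =
    ((pathPow n k).induce (↑S : Set (Fin n))ᶜ).connectedComponentMk v := by
  by_cases h : u = v
  · rw [h]
  · apply ConnectedComponent.sound
    apply Adj.reachable
    exact ⟨fun he => h (Subtype.ext he), h1, h2⟩

theorem pathPow_separator_lower_bound (n k p q : ℕ) (hn : 0 < n) (hk : 0 < k)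
    (hp : 0 < p) (hq : 0 < q)
    (S : Finset (Fin n)) (hScard : S.card = p)
    (hcomp : CompsLE (pathPow n k) (↑S) q) :
    k * n ≤ p * q + k * (p + q) := by
  classical
  set Sc : Set (Fin n) := (↑S : Set (Fin n))ᶜ with hSc
  set GI := (pathPow n k).induce Sc with hGI
  -- cardinality of the complement
  have hpn : p ≤ n := by
    rw [← hScard]
    simpa using S.card_le_card (Finset.subset_univ S)
  have hcard : Fintype.card Sc = n - p := by
    have e : Fintype.card Sc = Fintype.card {x : Fin n // ¬ x ∈ S} :=
      Fintype.card_congr (Equiv.subtypeEquivRight (by simp [hSc]))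
    rw [e, Fintype.card_subtype_compl]
    simp [Fintype.card_subtype, hScard]
  by_cases hne : Nonempty Sc
  case neg =>
    have h0 : n - p = 0 := by
      rw [← hcard]; simp [Fintype.card_eq_zero_iff.mpr (not_nonempty_iff.mp hne)]
    have : n ≤ p := by omega
    calc k * n ≤ k * p := Nat.mul_le_mul_left k this
      _ ≤ p * q + k * (p + q) := by nlinarith
  case pos =>
  set m := Fintype.card GI.ConnectedComponent with hm
  -- counting: n - p ≤ m * q
  have hcount : n - p ≤ m * q := by
    rw [← hcard]
    rw [← Finset.card_univ]
    have hfb : ∀ c : GI.ConnectedComponent,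
        (Finset.univ.filter (fun v => GI.connectedComponentMk v = c)).card ≤ q := by
      intro c
      have hc := hcomp c
      rw [Nat.card_eq_fintype_card] at hc
      calc (Finset.univ.filter (fun v => GI.connectedComponentMk v = c)).card
          = Fintype.card {v : Sc // GI.connectedComponentMk v = c} :=
            (Fintype.card_subtype _).symm
        _ = Fintype.card c.supp := Fintype.card_congr
            (Equiv.subtypeEquivRight fun v => (ConnectedComponent.mem_supp_iff c v).symm)
        _ ≤ q := hc
    calc Finset.univ.card
        = ∑ c : GI.ConnectedComponent,
            (Finset.univ.filter (fun v => GI.connectedComponentMk v = c)).card :=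
          Finset.card_eq_sum_card_fiberwise (fun x _ => Finset.mem_univ _)
      _ ≤ ∑ _c : GI.ConnectedComponent, q := Finset.sum_le_sum (fun c _ => hfb c)
      _ = m * q := by simp [hm, mul_comm]
  -- fibers and minima
  let fib : GI.ConnectedComponent → Finset Sc :=
    fun c => Finset.univ.filter (fun v => GI.connectedComponentMk v = c)
  have hfibne : ∀ c, (fib c).Nonempty := by
    intro c
    obtain ⟨v, hv⟩ := c.exists_rep
    refine ⟨v, ?_⟩
    simp only [fib, Finset.mem_filter]
    exact ⟨Finset.mem_univ _, hv⟩
  have hμex : ∀ c : GI.ConnectedComponent, ∃ μc : ℕ,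
      (∃ v ∈ fib c, (v : Fin n).val = μc) ∧ ∀ v ∈ fib c, μc ≤ (v : Fin n).val := by
    intro c
    obtain ⟨v, hv, hmin⟩ := Finset.exists_min_image (fib c)
      (fun v => (v : Fin n).val) (hfibne c)
    exact ⟨(v : Fin n).val, ⟨v, hv, rfl⟩, hmin⟩
  choose μ hμmem hμle using hμex
  have hμlt : ∀ c, μ c < n := by
    intro c
    obtain ⟨v, _, he⟩ := hμmem c
    exact he ▸ (v : Fin n).isLt
  have hmkfib : ∀ c, ∀ v ∈ fib c, GI.connectedComponentMk v = c := by
    intro c v hv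
    simpa [fib] using hv
  -- vertices in distinct components are far apart
  have hfar : ∀ (c c' : GI.ConnectedComponent), c ≠ c' →
      ∀ v ∈ fib c, ∀ w ∈ fib c',
      ((v : Fin n).val : ℤ) - ((w : Fin n).val : ℤ) ≤ k →
      ((w : Fin n).val : ℤ) - ((v : Fin n).val : ℤ) ≤ k → False := by
    intro c c' hcc v hv w hw h1 h2
    have := pp_same_comp n k S v w h1 h2
    rw [hmkfib c v hv, hmkfib c' w hw] at this
    exact hcc this
  -- global minimum vertex
  obtain ⟨v₀, -, hv₀min⟩ := Finset.exists_min_image (Finset.univ : Finset Sc)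
    (fun v => (v : Fin n).val) (Finset.univ_nonempty)
  set c₀ := GI.connectedComponentMk v₀ with hc₀
  have hv₀fib : v₀ ∈ fib c₀ := by simp [fib]; rfl
  have hμbig : ∀ c, c ≠ c₀ → k + 1 ≤ μ c := by
    intro c hc
    obtain ⟨v, hv, hveq⟩ := hμmem c
    by_contra h
    push_neg at h
    have h0 : (v₀ : Fin n).val ≤ (v : Fin n).val := hv₀min v (Finset.mem_univ v)
    apply hfar c c₀ hc v hv v₀ hv₀fib <;> omega
  -- preceding k vertices of each component's minimum are in S
  have hS : ∀ c, ∀ j, 1 ≤ j → j ≤ k → j ≤ μ c → ∀ (hlt : μ c - j < n),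
      (⟨μ c - j, hlt⟩ : Fin n) ∈ S := by
    intro c j hj1 hjk hjμ hlt
    by_contra hx
    have hxm : (⟨μ c - j, hlt⟩ : Fin n) ∈ Sc := by
      simp only [hSc, Set.mem_compl_iff, Finset.mem_coe]
      exact hx
    obtain ⟨v, hv, hveq⟩ := hμmem c
    have hsame := pp_same_comp n k S ⟨_, hxm⟩ v (by simp; omega) (by simp; omega)
    rw [hmkfib c v hv] at hsame
    have : (⟨(⟨μ c - j, hlt⟩ : Fin n), hxm⟩ : Sc) ∈ fib c := by
      simp [fib]; exact hsame
    have := hμle c _ this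
    simp at this
    omega
  -- the injection into S
  have hinj : Fintype.card ({c : GI.ConnectedComponent // c ≠ c₀} × Fin k)
      ≤ Fintype.card {x : Fin n // x ∈ S} := by
    apply Fintype.card_le_of_injective
      (fun ci => (⟨⟨μ ci.1.1 - (ci.2.val + 1), by have := hμlt ci.1.1; omega⟩,
        hS ci.1.1 (ci.2.val + 1) (by omega)
          (by have := ci.2.isLt; omega)
          (by have := hμbig ci.1.1 ci.1.2; have := ci.2.isLt; omega) _⟩ :
          {x : Fin n // x ∈ S}))
    rintro ⟨⟨a, ha⟩, i⟩ ⟨⟨b, hb⟩, j⟩ hab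
    simp only [Subtype.mk_eq_mk, Fin.mk_eq_mk] at hab
    have hia : (i : ℕ) < k := i.isLt
    have hjb : (j : ℕ) < k := j.isLt
    have hka : k + 1 ≤ μ a := hμbig a ha
    have hkb : k + 1 ≤ μ b := hμbig b hb
    by_cases hcc : a = b
    · subst hcc
      have : (i : ℕ) = j := by omega
      simp [Prod.ext_iff, Fin.ext_iff, this]
    · exfalso
      obtain ⟨va, hva, hvaeq⟩ := hμmem a
      obtain ⟨vb, hvb, hvbeq⟩ := hμmem b
      apply hfar a b hcc va hva vb hvb <;> omega
  have hcard1 : Fintype.card {c : GI.ConnectedComponent // c ≠ c₀} = m - 1 := by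
    rw [Fintype.card_subtype_compl, Fintype.card_subtype_eq]
  have hcardS : Fintype.card {x : Fin n // x ∈ S} = p :=
    (Fintype.card_congr (Equiv.refl _)).trans ((Fintype.card_coe S).trans hScard)
  have h2 : (m - 1) * k ≤ p := by
    have := hinj
    rwa [Fintype.card_prod, hcard1, Fintype.card_fin, hcardS] at this
  have hm1 : 1 ≤ m := Fintype.card_pos_iff.mpr ⟨c₀⟩
  -- final arithmetic
  obtain ⟨m', hm'⟩ : ∃ m', m = m' + 1 := ⟨m - 1, by omega⟩
  have h2' : m' * k ≤ p := by rw [hm'] at h2; simpa using h2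
  have hc' : n ≤ p + (m' + 1) * q := by rw [hm'] at hcount; omega
  calc k * n ≤ k * (p + (m' + 1) * q) := Nat.mul_le_mul_left k hc'
    _ = k * p + (m' * k) * q + k * q := by ring
    _ ≤ k * p + p * q + k * q := by
        have := Nat.mul_le_mul_right q h2'
        omega
    _ ≤ p * q + k * (p + q) := by ring_nf; omega
end
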